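/- arXiv:1312.4913 — 4 statements merged into one kernel-verified Lean document; each statement's English description precedes it below -/
import Mathlib

section
/- Let (ω,ρ) be a classical solution of the 1D model Boussinesq system on [0,T], let x ∈ (0,1), and let φ_t(x) be the characteristic through x. Set M(t) := ∫₀^t sup_{y∈[0,1]} |ω(s,y)| ds. Then for every t ∈ [0,T], the characteristic satisfies x^{exp(M(t))} ≤ φ_t(x) ≤ x^{exp(-M(t))}. -/
open MeasureTheory Set

/-- `Ω(t,x) = ∫_x^1 ω(t,y)/y dy`. -/
noncomputable def OmegaF (ω : ℝ → ℝ → ℝ) (t x : ℝ) : ℝ := ∫ y in x..1, ω t y / y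

/-- The velocity `u(t,x) = -x Ω(t,x)`. -/
noncomputable def uF (ω : ℝ → ℝ → ℝ) (t x : ℝ) : ℝ := -x * OmegaF ω t x

/-- A classical solution of the 1D model Boussinesq system on a time interval `I`:
the pair `(ω,ρ)` is continuously differentiable in `(t,x)` on `I × [0,1]` and the
equations `∂_t ρ + u ∂_x ρ = 0`, `∂_t ω + u ∂_x ω = ∂_x ρ` hold pointwise. -/
def IsClassicalSolution (ω ρ : ℝ → ℝ → ℝ) (I : Set ℝ) : Prop :=
  ContDiffOn ℝ 1 (fun p : ℝ × ℝ => ω p.1 p.2) (I ×ˢ Icc (0:ℝ) 1) ∧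
  ContDiffOn ℝ 1 (fun p : ℝ × ℝ => ρ p.1 p.2) (I ×ˢ Icc (0:ℝ) 1) ∧
  ∀ t ∈ I, ∀ x ∈ Icc (0:ℝ) 1,
    (deriv (fun s => ρ s x) t + uF ω t x * deriv (fun y => ρ t y) x = 0) ∧
    (deriv (fun s => ω s x) t + uF ω t x * deriv (fun y => ω t y) x
        = deriv (fun y => ρ t y) x)

/-- `sup_{x ∈ [0,1]} |f x|`. -/
noncomputable def supAbs (f : ℝ → ℝ) : ℝ := sSup ((fun x => |f x|) '' Icc (0:ℝ) 1)

/-- **Bounds on characteristics.** For a classical solution `(ω,ρ)` on `[0,T]`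
and the characteristic `φ` through `x ∈ (0,1)`, setting
`M(t) = ∫_0^t ‖ω(s)‖_{L^∞} ds`, one has `x^{exp(M(t))} ≤ φ(t) ≤ x^{exp(-M(t))}`. -/
theorem characteristic_bounds (T : ℝ) (hT : 0 ≤ T) (ω ρ : ℝ → ℝ → ℝ)
    (hsol : IsClassicalSolution ω ρ (Icc 0 T))
    (x : ℝ) (hx : x ∈ Ioo (0:ℝ) 1) (φ : ℝ → ℝ) (hφ0 : φ 0 = x)
    (hφ : ∀ t ∈ Icc (0:ℝ) T, HasDerivAt φ (uF ω t (φ t)) t) :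
    ∀ t ∈ Icc (0:ℝ) T,
      x ^ Real.exp (∫ s in (0:ℝ)..t, supAbs (fun y => ω s y)) ≤ φ t ∧
      φ t ≤ x ^ Real.exp (-∫ s in (0:ℝ)..t, supAbs (fun y => ω s y)) := by
  obtain ⟨hx0, hx1⟩ := hx
  have hωc : ContinuousOn (fun p : ℝ × ℝ => ω p.1 p.2) (Icc 0 T ×ˢ Icc (0:ℝ) 1) :=
    hsol.1.continuousOn
  set m : ℝ → ℝ := fun t => supAbs (fun y => ω t y) with hm_def
  set M : ℝ → ℝ := fun t => ∫ s in (0:ℝ)..t, m s with hM_def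
  -- continuity in `y` for fixed `t`
  have hωy : ∀ t ∈ Icc (0:ℝ) T, ContinuousOn (fun y => |ω t y|) (Icc (0:ℝ) 1) := by
    intro t ht
    have h1 : ContinuousOn ((fun p : ℝ × ℝ => ω p.1 p.2) ∘ (fun y => (t, y)))
        (Icc (0:ℝ) 1) :=
      hωc.comp ((continuous_const.prodMk continuous_id).continuousOn)
        (fun y hy => Set.mk_mem_prod ht hy)
    exact h1.abs
  have hbdd : ∀ t ∈ Icc (0:ℝ) T, BddAbove ((fun y => |ω t y|) '' Icc (0:ℝ) 1) :=
    fun t ht => (isCompact_Icc.image_of_continuousOn (hωy t ht)).bddAbove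
  have hmb : ∀ t ∈ Icc (0:ℝ) T, ∀ y ∈ Icc (0:ℝ) 1, |ω t y| ≤ m t := fun t ht y hy =>
    le_csSup (hbdd t ht) (mem_image_of_mem _ hy)
  have hm0 : ∀ t ∈ Icc (0:ℝ) T, 0 ≤ m t := fun t ht =>
    le_trans (abs_nonneg (ω t 0)) (hmb t ht 0 ⟨le_refl _, zero_le_one⟩)
  -- continuity of `m` on `[0,T]`
  have hmc : ContinuousOn m (Icc 0 T) := by
    set f : Icc (0:ℝ) T → ℝ → ℝ :=
      fun t y => |ω (t : ℝ) ((projIcc (0:ℝ) 1 zero_le_one y : Icc (0:ℝ) 1) : ℝ)| with hf_def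
    have hmap : ∀ p : Icc (0:ℝ) T × ℝ,
        (((p.1 : ℝ), ((projIcc (0:ℝ) 1 zero_le_one p.2 : Icc (0:ℝ) 1) : ℝ)) : ℝ × ℝ)
          ∈ Icc 0 T ×ˢ Icc (0:ℝ) 1 :=
      fun p => ⟨p.1.2, (projIcc (0:ℝ) 1 zero_le_one p.2).2⟩
    have hf : Continuous (Function.uncurry f) := by
      have : Continuous ((fun p : ℝ × ℝ => ω p.1 p.2) ∘
          (fun p : Icc (0:ℝ) T × ℝ =>
            (((p.1 : ℝ), ((projIcc (0:ℝ) 1 zero_le_one p.2 : Icc (0:ℝ) 1) : ℝ)) : ℝ × ℝ))) :=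
        hωc.comp_continuous
          ((continuous_subtype_val.comp continuous_fst).prodMk
            (continuous_subtype_val.comp (continuous_projIcc.comp continuous_snd))) hmap
      exact this.abs
    have hsup := isCompact_Icc.continuous_sSup (f := f) (K := Icc (0:ℝ) 1) hf
    rw [continuousOn_iff_continuous_restrict]
    have : (Icc (0:ℝ) T).restrict m = fun t : Icc (0:ℝ) T => sSup (f t '' Icc (0:ℝ) 1) := by
      funext t
      have himg : f t '' Icc (0:ℝ) 1 = (fun y => |ω (t : ℝ) y|) '' Icc (0:ℝ) 1 := by
        apply image_congr
        intro y hy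
        simp [hf_def, projIcc_of_mem zero_le_one hy]
      rw [himg]; rfl
    show Continuous ((Icc (0:ℝ) T).restrict m); rw [this]; exact hsup
  have hmint : ∀ t ∈ Icc (0:ℝ) T, IntervalIntegrable m volume 0 t := by
    intro t ht
    apply ContinuousOn.intervalIntegrable
    rw [uIcc_of_le ht.1]
    exact hmc.mono (Icc_subset_Icc le_rfl ht.2)
  have hMc : ContinuousOn M (Icc 0 T) := by
    have hint : IntegrableOn m (uIcc (0:ℝ) T) volume := by
      rw [uIcc_of_le hT]
      exact hmc.integrableOn_compact isCompact_Icc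
    have := intervalIntegral.continuousOn_primitive_interval (a := (0:ℝ)) (b := T) hint
    rwa [uIcc_of_le hT] at this
  -- bound on `Ω`
  have hΩb : ∀ s ∈ Icc (0:ℝ) T, ∀ z ∈ Ioo (0:ℝ) 1,
      |OmegaF ω s z| ≤ m s * (-Real.log z) := by
    intro s hsT z hz
    obtain ⟨hz0, hz1⟩ := hz
    have hginteg : IntervalIntegrable (fun y => m s * y⁻¹) volume z 1 := by
      apply ContinuousOn.intervalIntegrable
      rw [uIcc_of_le hz1.le]
      exact continuousOn_const.mul (continuousOn_inv₀.mono
        (fun y hy => ne_of_gt (lt_of_lt_of_le hz0 hy.1)))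
    have hle : ∀ᵐ y ∂(volume.restrict (Set.uIoc z 1)), ‖ω s y / y‖ ≤ m s * y⁻¹ := by
      apply ae_restrict_of_forall_mem measurableSet_uIoc
      intro y hy
      rw [uIoc_of_le hz1.le] at hy
      have hy0 : 0 < y := lt_trans hz0 hy.1
      have hb : |ω s y| ≤ m s := hmb s hsT y ⟨hy0.le, hy.2⟩
      rw [Real.norm_eq_abs, abs_div, abs_of_pos hy0, div_eq_mul_inv]
      exact mul_le_mul_of_nonneg_right hb (inv_nonneg.mpr hy0.le)
    have hkey := intervalIntegral.norm_integral_le_of_norm_le hz1.le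
      (by rw [uIoc_of_le hz1.le] at hle; exact (ae_restrict_iff' measurableSet_Ioc).mp hle) hginteg
    rw [Real.norm_eq_abs] at hkey
    have hcomp : ∫ y in z..1, m s * y⁻¹ = m s * (-Real.log z) := by
      rw [intervalIntegral.integral_const_mul, integral_inv_of_pos hz0 one_pos]
      rw [show (1:ℝ) / z = z⁻¹ from one_div z, Real.log_inv]
    rw [hcomp] at hkey
    calc |OmegaF ω s z| ≤ |m s * (-Real.log z)| := le_trans hkey (le_abs_self _)
      _ = m s * (-Real.log z) := abs_of_nonneg (mul_nonneg (hm0 s hsT)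
          (by have := Real.log_neg hz0 hz1; linarith))
  -- conversion between the `rpow` bounds and bounds on `G = log (-log φ)`
  set G0 : ℝ := Real.log (-Real.log x) with hG0_def
  have hLx : 0 < -Real.log x := neg_pos.mpr (Real.log_neg hx0 hx1)
  have hconvLow : ∀ s A : ℝ, φ s ∈ Ioo (0:ℝ) 1 →
      (x ^ Real.exp A ≤ φ s ↔ Real.log (-Real.log (φ s)) ≤ G0 + A) := by
    intro s A hs
    obtain ⟨h0, h1⟩ := hs
    have hLP : 0 < -Real.log (φ s) := neg_pos.mpr (Real.log_neg h0 h1)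
    have e1 : x ^ Real.exp A ≤ φ s ↔ Real.log x * Real.exp A ≤ Real.log (φ s) := by
      rw [Real.rpow_def_of_pos hx0, ← Real.le_log_iff_exp_le h0]
    have e2 : Real.log x * Real.exp A ≤ Real.log (φ s) ↔
        -Real.log (φ s) ≤ (-Real.log x) * Real.exp A := by
      rw [neg_mul]; exact neg_le_neg_iff.symm
    have e3 : -Real.log (φ s) ≤ (-Real.log x) * Real.exp A ↔
        Real.log (-Real.log (φ s)) ≤ G0 + A := by
      rw [← Real.log_le_log_iff hLP (mul_pos hLx (Real.exp_pos A)),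
        Real.log_mul (ne_of_gt hLx) (Real.exp_pos A).ne', Real.log_exp, hG0_def]
    exact e1.trans (e2.trans e3)
  have hconvHigh : ∀ s A : ℝ, φ s ∈ Ioo (0:ℝ) 1 →
      (φ s ≤ x ^ Real.exp (-A) ↔ G0 - A ≤ Real.log (-Real.log (φ s))) := by
    intro s A hs
    obtain ⟨h0, h1⟩ := hs
    have hLP : 0 < -Real.log (φ s) := neg_pos.mpr (Real.log_neg h0 h1)
    have e1 : φ s ≤ x ^ Real.exp (-A) ↔ Real.log (φ s) ≤ Real.log x * Real.exp (-A) := by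
      rw [Real.rpow_def_of_pos hx0, ← Real.log_le_iff_le_exp h0]
    have e2 : Real.log (φ s) ≤ Real.log x * Real.exp (-A) ↔
        (-Real.log x) * Real.exp (-A) ≤ -Real.log (φ s) := by
      rw [neg_mul]; exact neg_le_neg_iff.symm
    have e3 : (-Real.log x) * Real.exp (-A) ≤ -Real.log (φ s) ↔
        G0 - A ≤ Real.log (-Real.log (φ s)) := by
      rw [← Real.log_le_log_iff (mul_pos hLx (Real.exp_pos (-A))) hLP,
        Real.log_mul (ne_of_gt hLx) (Real.exp_pos (-A)).ne', Real.log_exp, hG0_def,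
        sub_eq_add_neg]
    exact e1.trans (e2.trans e3)
  -- the set where the bounds hold
  set S : Set ℝ := {t | x ^ Real.exp (M t) ≤ φ t ∧ φ t ≤ x ^ Real.exp (-M t)} with hS_def
  have hφcont : ContinuousOn φ (Icc 0 T) :=
    fun t ht => (hφ t ht).continuousAt.continuousWithinAt
  have hmain : Icc 0 T ⊆ S := by
    apply IsClosed.Icc_subset_of_forall_mem_nhdsWithin
    · -- closedness
      have hf1 : ContinuousOn (fun t => x ^ Real.exp (M t)) (Icc 0 T) := by
        have hrw : (fun t => x ^ Real.exp (M t)) =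
            fun t => Real.exp (Real.log x * Real.exp (M t)) :=
          funext fun t => Real.rpow_def_of_pos hx0 _
        rw [hrw]
        exact Real.continuous_exp.comp_continuousOn
          (continuousOn_const.mul (Real.continuous_exp.comp_continuousOn hMc))
      have hf2 : ContinuousOn (fun t => x ^ Real.exp (-M t)) (Icc 0 T) := by
        have hrw : (fun t => x ^ Real.exp (-M t)) =
            fun t => Real.exp (Real.log x * Real.exp (-M t)) :=
          funext fun t => Real.rpow_def_of_pos hx0 _
        rw [hrw]
        exact Real.continuous_exp.comp_continuousOn
          (continuousOn_const.mul (Real.continuous_exp.comp_continuousOn hMc.neg))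
      have hc : ContinuousOn
          (fun t => ((x ^ Real.exp (M t) - φ t, φ t - x ^ Real.exp (-M t)) : ℝ × ℝ))
          (Icc 0 T) := (hf1.sub hφcont).prodMk (hφcont.sub hf2)
      have hset : S ∩ Icc 0 T = Icc 0 T ∩
          (fun t => ((x ^ Real.exp (M t) - φ t, φ t - x ^ Real.exp (-M t)) : ℝ × ℝ)) ⁻¹'
            (Iic (0:ℝ) ×ˢ Iic (0:ℝ)) := by
        ext t
        simp only [hS_def, mem_inter_iff, mem_setOf_eq, mem_preimage, mem_prod, mem_Iic,
          sub_nonpos]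
        tauto
      rw [hset]
      exact hc.preimage_isClosed_of_isClosed isClosed_Icc (isClosed_Iic.prod isClosed_Iic)
    · -- base case
      show x ^ Real.exp (M 0) ≤ φ 0 ∧ φ 0 ≤ x ^ Real.exp (-M 0)
      have hM0 : M 0 = 0 := intervalIntegral.integral_same
      rw [hM0, neg_zero, Real.exp_zero, Real.rpow_one, hφ0]
      exact ⟨le_refl x, le_refl x⟩
    · -- inductive step
      rintro t ⟨hts, ht0, htT⟩
      obtain ⟨hl, hu⟩ : x ^ Real.exp (M t) ≤ φ t ∧ φ t ≤ x ^ Real.exp (-M t) := hts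
      have ht : t ∈ Icc 0 T := ⟨ht0, htT.le⟩
      have hφt0 : 0 < φ t := lt_of_lt_of_le (Real.rpow_pos_of_pos hx0 _) hl
      have hφt1 : φ t < 1 :=
        lt_of_le_of_lt hu (Real.rpow_lt_one hx0.le hx1 (Real.exp_pos _))
      -- find a small interval to the right on which φ stays in (0,1)
      have hnb : ∀ᶠ s in nhds t, φ s ∈ Ioo (0:ℝ) 1 :=
        (hφ t ht).continuousAt.preimage_mem_nhds (Ioo_mem_nhds hφt0 hφt1)
      rw [Metric.eventually_nhds_iff] at hnb
      obtain ⟨ε, hε, hball⟩ := hnb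
      set b := min (t + ε / 2) T with hb_def
      have htb : t < b := lt_min (by linarith) htT
      have hbT : b ≤ T := min_le_right _ _
      have hsub : ∀ s ∈ Icc t b, φ s ∈ Ioo (0:ℝ) 1 := by
        intro s hs
        apply hball
        rw [Real.dist_eq, abs_of_nonneg (by linarith [hs.1])]
        have : s ≤ t + ε / 2 := le_trans hs.2 (min_le_left _ _)
        linarith
      have hJT : Icc t b ⊆ Icc 0 T :=
        fun s hs => ⟨le_trans ht0 hs.1, le_trans hs.2 hbT⟩
      -- the logarithmic quantity `G`
      set G : ℝ → ℝ := fun s => Real.log (-Real.log (φ s)) with hG_def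
      set g : ℝ → ℝ := fun s => OmegaF ω s (φ s) / (-Real.log (φ s)) with hg_def
      have hG : ∀ s ∈ Icc t b, HasDerivAt G (g s) s := by
        intro s hs
        obtain ⟨h0, h1⟩ := hsub s hs
        have hlog : HasDerivAt (fun s => Real.log (φ s)) (uF ω s (φ s) / φ s) s :=
          (hφ s (hJT hs)).log (ne_of_gt h0)
        have hneg : HasDerivAt (fun s => -Real.log (φ s)) (OmegaF ω s (φ s)) s := by
          have := hlog.neg
          refine this.congr_deriv ?_
          rw [uF]
          field_simp
        have hLpos : 0 < -Real.log (φ s) := neg_pos.mpr (Real.log_neg h0 h1)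
        exact hneg.log (ne_of_gt hLpos)
      have hgb : ∀ s ∈ Icc t b, |g s| ≤ m s := by
        intro s hs
        obtain ⟨h0, h1⟩ := hsub s hs
        have hLpos : 0 < -Real.log (φ s) := neg_pos.mpr (Real.log_neg h0 h1)
        rw [hg_def]
        rw [abs_div, abs_of_pos hLpos, div_le_iff₀ hLpos]
        exact hΩb s (hJT hs) (φ s) ⟨h0, h1⟩
      have hM' : ∀ s ∈ Ioo t b, HasDerivAt M (m s) s := by
        intro s hs
        have hsT : s ∈ Ioo (0:ℝ) T :=
          ⟨lt_of_le_of_lt ht0 hs.1, lt_of_lt_of_le hs.2 hbT⟩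
        have hcont : ContinuousAt m s := hmc.continuousAt (Icc_mem_nhds hsT.1 hsT.2)
        have hmeas : StronglyMeasurableAtFilter m (nhds s) volume :=
          ContinuousOn.stronglyMeasurableAtFilter isOpen_Ioo
            (hmc.mono Ioo_subset_Icc_self) s hsT
        exact intervalIntegral.integral_hasDerivAt_right
          (hmint s ⟨hsT.1.le, hsT.2.le⟩) hmeas hcont
      have hGc : ContinuousOn G (Icc t b) :=
        fun s hs => ((hG s hs).continuousAt).continuousWithinAt
      have hMcJ : ContinuousOn M (Icc t b) := hMc.mono hJT
      -- monotonicity of `M - G` and `M + G`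
      have mono1 : MonotoneOn (fun s => M s - G s) (Icc t b) := by
        apply monotoneOn_of_hasDerivWithinAt_nonneg (convex_Icc t b)
          (f' := fun s => m s - g s) (hMcJ.sub hGc)
        · intro s hs
          rw [interior_Icc] at hs
          exact (((hM' s hs).sub (hG s (Ioo_subset_Icc_self hs)))).hasDerivWithinAt
        · intro s hs
          rw [interior_Icc] at hs
          have := abs_le.mp (hgb s (Ioo_subset_Icc_self hs))
          linarith [this.2]
      have mono2 : MonotoneOn (fun s => M s + G s) (Icc t b) := by
        apply monotoneOn_of_hasDerivWithinAt_nonneg (convex_Icc t b)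
          (f' := fun s => m s + g s) (hMcJ.add hGc)
        · intro s hs
          rw [interior_Icc] at hs
          exact (((hM' s hs).add (hG s (Ioo_subset_Icc_self hs)))).hasDerivWithinAt
        · intro s hs
          rw [interior_Icc] at hs
          have := abs_le.mp (hgb s (Ioo_subset_Icc_self hs))
          linarith [this.1]
      -- bounds at `t`
      have hGt_up : G t ≤ G0 + M t := (hconvLow t (M t) ⟨hφt0, hφt1⟩).mp hl
      have hGt_lo : G0 - M t ≤ G t := (hconvHigh t (M t) ⟨hφt0, hφt1⟩).mp hu
      have hIccS : Icc t b ⊆ S := by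
        intro s hs
        have htmem : t ∈ Icc t b := ⟨le_rfl, htb.le⟩
        have h1 := mono1 htmem hs hs.1
        have h2 := mono2 htmem hs hs.1
        simp only at h1 h2
        have hGs_up : G s ≤ G0 + M s := by linarith
        have hGs_lo : G0 - M s ≤ G s := by linarith
        exact ⟨(hconvLow s (M s) (hsub s hs)).mpr hGs_up,
          (hconvHigh s (M s) (hsub s hs)).mpr hGs_lo⟩
      exact Filter.mem_of_superset (Ioc_mem_nhdsGT_of_mem ⟨le_rfl, htb⟩)
        (fun s hs => hIccS ⟨hs.1.le, hs.2⟩)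
  intro t ht
  exact hmain ht
end

section
/- Let (ω,ρ) be a classical solution of the 1D model Boussinesq system on [0,T] whose initial data satisfy: ρ₀ is nonincreasing on [1/2,1] and ω₀(x) = 0 for all x ∈ [1/2,1]. Assume also that for each t the map x ↦ φ_t(x) is strictly increasing on [0,1] (characteristics do not cross). Then for every t ∈ [0,T]: ω(t,x) ≤ 0 for all x ∈ [φ_t(1/2), 1], and the function t ↦ φ_t(1/2) is nondecreasing on [0,T]. -/
open MeasureTheory Set Filter Topology

/- ## Auxiliary lemmas -/

lemma slope_contra {h : ℝ → ℝ} {t₀ d : ℝ} (ht₀ : 0 < t₀) (hd : HasDerivAt h d t₀)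
    (hdpos : 0 < d) (hpos : ∀ t, 0 < t → t < t₀ → 0 < h t) (h0 : h t₀ = 0) : False := by
  have hs := hasDerivAt_iff_tendsto_slope.1 hd
  have hev : ∀ᶠ z in 𝓝[<] t₀, 0 < slope h t₀ z := by
    have h1 : Tendsto (slope h t₀) (𝓝[<] t₀) (𝓝 d) :=
      hs.mono_left (nhdsWithin_mono _ (fun z hz => ne_of_lt hz))
    exact h1.eventually (eventually_gt_nhds hdpos)
  have hev2 : ∀ᶠ z in 𝓝[<] t₀, 0 < z :=
    eventually_nhdsWithin_of_eventually_nhds (eventually_gt_nhds ht₀)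
  rcases (hev.and (hev2.and self_mem_nhdsWithin)).exists with ⟨z, hz1, hz2, hz3⟩
  have hzlt : z < t₀ := hz3
  have hsl : slope h t₀ z = h z / (z - t₀) := by
    rw [slope_def_field, h0]; ring_nf
  rw [hsl] at hz1
  have hzneg : z - t₀ < 0 := by linarith
  have : h z < 0 := by
    by_contra hc
    push_neg at hc
    have := div_nonpos_of_nonneg_of_nonpos hc hzneg.le
    linarith
  exact absurd (hpos z hz2 hzlt) (by linarith)

lemma deriv_nonpos_right {f : ℝ → ℝ} {y c d : ℝ} (hd : HasDerivAt f d y) (hyc : y < c)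
    (hmono : ∀ z ∈ Ioo y c, f z ≤ f y) : d ≤ 0 := by
  have hs : Tendsto (slope f y) (𝓝[>] y) (𝓝 d) :=
    (hasDerivAt_iff_tendsto_slope.1 hd).mono_left (nhdsWithin_mono _ (fun z hz => ne_of_gt hz))
  refine le_of_tendsto hs ?_
  have hev : ∀ᶠ z in 𝓝[>] y, z < c :=
    eventually_nhdsWithin_of_eventually_nhds (eventually_lt_nhds hyc)
  filter_upwards [hev, self_mem_nhdsWithin] with z hz1 hz2
  have hz : z ∈ Ioo y c := ⟨hz2, hz1⟩
  rw [slope_def_field]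
  have h1 : f z - f y ≤ 0 := by linarith [hmono z hz]
  have h2 : 0 < z - y := by linarith [hz.1]
  exact div_nonpos_of_nonpos_of_nonneg h1 h2.le

lemma deriv_nonpos_left {f : ℝ → ℝ} {y c d : ℝ} (hd : HasDerivAt f d y) (hcy : c < y)
    (hmono : ∀ z ∈ Ioo c y, f y ≤ f z) : d ≤ 0 := by
  have hs : Tendsto (slope f y) (𝓝[<] y) (𝓝 d) :=
    (hasDerivAt_iff_tendsto_slope.1 hd).mono_left (nhdsWithin_mono _ (fun z hz => ne_of_lt hz))
  refine le_of_tendsto hs ?_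
  have hev : ∀ᶠ z in 𝓝[<] y, c < z :=
    eventually_nhdsWithin_of_eventually_nhds (eventually_gt_nhds hcy)
  filter_upwards [hev, self_mem_nhdsWithin] with z hz1 hz2
  have hz : z ∈ Ioo c y := ⟨hz1, hz2⟩
  rw [slope_def_field]
  have h1 : 0 ≤ f z - f y := by linarith [hmono z hz]
  have h2 : z - y < 0 := by linarith [hz.2]
  exact div_nonpos_of_nonneg_of_nonpos h1 h2.le

lemma barrier {T : ℝ} {f fd b l B bd ld Bd : ℝ → ℝ}
    (hf : ∀ t ∈ Icc (0:ℝ) T, HasDerivAt f (fd t) t)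
    (hb : ∀ t, HasDerivAt b (bd t) t) (hl : ∀ t, HasDerivAt l (ld t) t)
    (hB : ∀ t, HasDerivAt B (Bd t) t)
    (h0b : b 0 < f 0) (h0l : l 0 < f 0) (h0B : f 0 < B 0)
    (hcb : ∀ t ∈ Icc (0:ℝ) T, b t ≤ f t → l t ≤ f t → f t ≤ B t → f t = b t → bd t < fd t)
    (hcl : ∀ t ∈ Icc (0:ℝ) T, b t ≤ f t → l t ≤ f t → f t ≤ B t → f t = l t → ld t < fd t)
    (hcB : ∀ t ∈ Icc (0:ℝ) T, b t ≤ f t → l t ≤ f t → f t ≤ B t → f t = B t → fd t < Bd t) :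
    ∀ t ∈ Icc (0:ℝ) T, b t < f t ∧ l t < f t ∧ f t < B t := by
  by_contra hcon
  set S : Set ℝ := {t | t ∈ Icc (0:ℝ) T ∧ (f t ≤ b t ∨ f t ≤ l t ∨ B t ≤ f t)} with hS
  have hSne : S.Nonempty := by
    rcases not_forall.1 hcon with ⟨t, ht⟩
    rcases Classical.not_imp.1 ht with ⟨htI, hP⟩
    refine ⟨t, htI, ?_⟩
    by_contra hq
    push_neg at hq
    exact hP ⟨hq.1, hq.2.1, hq.2.2⟩
  have hSbdd : BddBelow S := ⟨0, fun s hs => hs.1.1⟩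
  set t₀ := sInf S with ht₀def
  have ht₀le : ∀ s ∈ S, t₀ ≤ s := fun s hs => csInf_le hSbdd hs
  have ht₀0 : 0 ≤ t₀ := le_csInf hSne fun s hs => hs.1.1
  have ht₀T : t₀ ≤ T := by
    rcases hSne with ⟨s, hs⟩
    exact le_trans (csInf_le hSbdd hs) hs.1.2
  have ht₀Icc : t₀ ∈ Icc (0:ℝ) T := ⟨ht₀0, ht₀T⟩
  have hstrict : ∀ t, 0 ≤ t → t < t₀ → b t < f t ∧ l t < f t ∧ f t < B t := by
    intro t ht0 htlt
    by_contra hq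
    have htS : t ∈ S := by
      refine ⟨⟨ht0, le_trans htlt.le ht₀T⟩, ?_⟩
      by_contra hq2
      push_neg at hq2
      exact hq ⟨hq2.1, hq2.2.1, hq2.2.2⟩
    exact absurd (ht₀le t htS) (not_le.2 htlt)
  have hfc : ContinuousAt f t₀ := (hf t₀ ht₀Icc).continuousAt
  have hbc : ContinuousAt b t₀ := (hb t₀).continuousAt
  have hlc : ContinuousAt l t₀ := (hl t₀).continuousAt
  have hBc : ContinuousAt B t₀ := (hB t₀).continuousAt
  have hg0 : f t₀ ≤ b t₀ ∨ f t₀ ≤ l t₀ ∨ B t₀ ≤ f t₀ := by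
    by_contra hq
    push_neg at hq
    have hev : ∀ᶠ z in 𝓝 t₀, b z < f z ∧ l z < f z ∧ f z < B z := by
      have e1 : ∀ᶠ z in 𝓝 t₀, b z < f z := by
        have h2 : Tendsto (fun z => f z - b z) (𝓝 t₀) (𝓝 (f t₀ - b t₀)) := hfc.sub hbc
        have := h2.eventually (eventually_gt_nhds (by linarith [hq.1] : (0:ℝ) < f t₀ - b t₀))
        filter_upwards [this] with z hz; linarith
      have e2 : ∀ᶠ z in 𝓝 t₀, l z < f z := by
        have h2 : Tendsto (fun z => f z - l z) (𝓝 t₀) (𝓝 (f t₀ - l t₀)) := hfc.sub hlc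
        have := h2.eventually (eventually_gt_nhds (by linarith [hq.2.1] : (0:ℝ) < f t₀ - l t₀))
        filter_upwards [this] with z hz; linarith
      have e3 : ∀ᶠ z in 𝓝 t₀, f z < B z := by
        have h2 : Tendsto (fun z => B z - f z) (𝓝 t₀) (𝓝 (B t₀ - f t₀)) := hBc.sub hfc
        have := h2.eventually (eventually_gt_nhds (by linarith [hq.2.2] : (0:ℝ) < B t₀ - f t₀))
        filter_upwards [this] with z hz; linarith
      exact (e1.and (e2.and e3)).mono (fun z hz => ⟨hz.1, hz.2.1, hz.2.2⟩)
    rcases Metric.eventually_nhds_iff.1 hev with ⟨ε, hε, hball⟩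
    rcases Real.lt_sInf_add_pos hSne hε with ⟨s, hs, hslt⟩
    have h1 : t₀ ≤ s := ht₀le s hs
    have h2 : |s - t₀| < ε := by
      rw [abs_sub_lt_iff]; constructor <;> [linarith; linarith]
    have := hball (show dist s t₀ < ε by rwa [Real.dist_eq])
    rcases hs.2 with h | h | h <;> linarith [this.1, this.2.1, this.2.2]
  have ht₀pos : 0 < t₀ := by
    rcases lt_or_eq_of_le ht₀0 with h | h
    · exact h
    · exfalso; rw [← h] at hg0
      rcases hg0 with h1 | h1 | h1 <;> linarith
  have hevlt : ∀ᶠ z in 𝓝[<] t₀, (0:ℝ) < z :=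
    eventually_nhdsWithin_of_eventually_nhds (eventually_gt_nhds ht₀pos)
  have hgood : ∀ᶠ z in 𝓝[<] t₀, b z < f z ∧ l z < f z ∧ f z < B z := by
    filter_upwards [hevlt, self_mem_nhdsWithin] with z h1 h2
    exact hstrict z h1.le h2
  have hwb : b t₀ ≤ f t₀ := by
    have h2 : Tendsto (fun z => f z - b z) (𝓝[<] t₀) (𝓝 (f t₀ - b t₀)) :=
      (hfc.sub hbc).continuousWithinAt
    have := ge_of_tendsto h2 (hgood.mono fun z hz => (by linarith [hz.1] : (0:ℝ) ≤ f z - b z))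
    linarith
  have hwl : l t₀ ≤ f t₀ := by
    have h2 : Tendsto (fun z => f z - l z) (𝓝[<] t₀) (𝓝 (f t₀ - l t₀)) :=
      (hfc.sub hlc).continuousWithinAt
    have := ge_of_tendsto h2 (hgood.mono fun z hz => (by linarith [hz.2.1] : (0:ℝ) ≤ f z - l z))
    linarith
  have hwB : f t₀ ≤ B t₀ := by
    have h2 : Tendsto (fun z => B z - f z) (𝓝[<] t₀) (𝓝 (B t₀ - f t₀)) :=
      (hBc.sub hfc).continuousWithinAt
    have := ge_of_tendsto h2 (hgood.mono fun z hz => (by linarith [hz.2.2] : (0:ℝ) ≤ B z - f z))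
    linarith
  rcases hg0 with h | h | h
  · have heq : f t₀ = b t₀ := le_antisymm h hwb
    have hder := hcb t₀ ht₀Icc hwb hwl hwB heq
    exact slope_contra ht₀pos ((hf t₀ ht₀Icc).sub (hb t₀)) (by linarith)
      (fun t h1 h2 => by rw [Pi.sub_apply]; linarith [(hstrict t h1.le h2).1]) (by rw [Pi.sub_apply]; linarith)
  · have heq : f t₀ = l t₀ := le_antisymm h hwl
    have hder := hcl t₀ ht₀Icc hwb hwl hwB heq
    exact slope_contra ht₀pos ((hf t₀ ht₀Icc).sub (hl t₀)) (by linarith)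
      (fun t h1 h2 => by rw [Pi.sub_apply]; linarith [(hstrict t h1.le h2).2.1]) (by rw [Pi.sub_apply]; linarith)
  · have heq : f t₀ = B t₀ := le_antisymm hwB h
    have hder := hcB t₀ ht₀Icc hwb hwl hwB heq
    exact slope_contra ht₀pos ((hB t₀).sub (hf t₀ ht₀Icc)) (by linarith)
      (fun t h1 h2 => by rw [Pi.sub_apply]; linarith [(hstrict t h1.le h2).2.2]) (by rw [Pi.sub_apply]; linarith)

lemma hasDerivAt_comp_curve {F : ℝ → ℝ → ℝ} {T : ℝ}
    (hF : ContDiffOn ℝ 1 (fun p : ℝ × ℝ => F p.1 p.2) (Icc 0 T ×ˢ Icc (0:ℝ) 1))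
    {g : ℝ → ℝ} {gd t : ℝ} (ht : t ∈ Ioo 0 T) (hgt : g t ∈ Ioo (0:ℝ) 1)
    (hg : HasDerivAt g gd t) :
    HasDerivAt (fun s => F s (g s))
      (deriv (fun s => F s (g t)) t + gd * deriv (fun y => F t y) (g t)) t := by
  have hmem : Icc 0 T ×ˢ Icc (0:ℝ) 1 ∈ 𝓝 ((t, g t) : ℝ × ℝ) := by
    have h1 : Ioo (0:ℝ) T ×ˢ Ioo (0:ℝ) 1 ∈ 𝓝 ((t, g t) : ℝ × ℝ) :=
      (isOpen_Ioo.prod isOpen_Ioo).mem_nhds ⟨ht, hgt⟩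
    exact mem_of_superset h1 (prod_mono Ioo_subset_Icc_self Ioo_subset_Icc_self)
  have hca : ContDiffAt ℝ 1 (fun p : ℝ × ℝ => F p.1 p.2) (t, g t) := hF.contDiffAt hmem
  have hdF : DifferentiableAt ℝ (fun p : ℝ × ℝ => F p.1 p.2) (t, g t) :=
    hca.differentiableAt one_ne_zero
  set L := fderiv ℝ (fun p : ℝ × ℝ => F p.1 p.2) (t, g t) with hLdef
  have hL : HasFDerivAt (fun p : ℝ × ℝ => F p.1 p.2) L (t, g t) := hdF.hasFDerivAt
  have hcurve : HasDerivAt (fun s => ((s, g s) : ℝ × ℝ)) ((1:ℝ), gd) t :=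
    HasDerivAt.prodMk (hasDerivAt_id t) hg
  have hcomp : HasDerivAt (fun s => F s (g s)) (L ((1:ℝ), gd)) t :=
    hL.comp_hasDerivAt (f := fun s => ((s, g s) : ℝ × ℝ)) t hcurve
  have h1 : HasDerivAt (fun s => F s (g t)) (L ((1:ℝ), (0:ℝ))) t := by
    have hc : HasDerivAt (fun s => ((s, g t) : ℝ × ℝ)) ((1:ℝ), (0:ℝ)) t :=
      HasDerivAt.prodMk (hasDerivAt_id t) (hasDerivAt_const t (g t))
    exact hL.comp_hasDerivAt (f := fun s => ((s, g t) : ℝ × ℝ)) t hc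
  have h2 : HasDerivAt (fun y => F t y) (L ((0:ℝ), (1:ℝ))) (g t) := by
    have hc : HasDerivAt (fun y => ((t, y) : ℝ × ℝ)) ((0:ℝ), (1:ℝ)) (g t) :=
      HasDerivAt.prodMk (hasDerivAt_const (g t) t) (hasDerivAt_id (g t))
    exact hL.comp_hasDerivAt (f := fun y => ((t, y) : ℝ × ℝ)) (g t) hc
  rw [h1.deriv, h2.deriv]
  have hlin : L ((1:ℝ), gd) = L ((1:ℝ), (0:ℝ)) + gd * L ((0:ℝ), (1:ℝ)) := by
    have hv : ((1:ℝ), gd) = ((1:ℝ), (0:ℝ)) + gd • ((0:ℝ), (1:ℝ)) := by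
      simp [Prod.ext_iff]
    rw [hv, map_add, L.map_smul, smul_eq_mul]
  rw [← hlin]
  exact hcomp

lemma hasDerivAt_slice_x {F : ℝ → ℝ → ℝ} {T : ℝ}
    (hF : ContDiffOn ℝ 1 (fun p : ℝ × ℝ => F p.1 p.2) (Icc 0 T ×ˢ Icc (0:ℝ) 1))
    {t y : ℝ} (ht : t ∈ Ioo 0 T) (hy : y ∈ Ioo (0:ℝ) 1) :
    HasDerivAt (fun z => F t z) (deriv (fun z => F t z) y) y := by
  have hmem : Icc 0 T ×ˢ Icc (0:ℝ) 1 ∈ 𝓝 ((t, y) : ℝ × ℝ) := by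
    have h1 : Ioo (0:ℝ) T ×ˢ Ioo (0:ℝ) 1 ∈ 𝓝 ((t, y) : ℝ × ℝ) :=
      (isOpen_Ioo.prod isOpen_Ioo).mem_nhds ⟨ht, hy⟩
    exact mem_of_superset h1 (prod_mono Ioo_subset_Icc_self Ioo_subset_Icc_self)
  have hdF : DifferentiableAt ℝ (fun p : ℝ × ℝ => F p.1 p.2) (t, y) :=
    (hF.contDiffAt hmem).differentiableAt one_ne_zero
  have hc : HasDerivAt (fun z => ((t, z) : ℝ × ℝ)) ((0:ℝ), (1:ℝ)) y :=
    HasDerivAt.prodMk (hasDerivAt_const y t) (hasDerivAt_id y)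
  have h := hdF.hasFDerivAt.comp_hasDerivAt (f := fun z => ((t, z) : ℝ × ℝ)) y hc
  exact h.differentiableAt.hasDerivAt

lemma diff_slice_t {F : ℝ → ℝ → ℝ} {T : ℝ}
    (hF : ContDiffOn ℝ 1 (fun p : ℝ × ℝ => F p.1 p.2) (Icc 0 T ×ˢ Icc (0:ℝ) 1))
    {t y : ℝ} (ht : t ∈ Ioo 0 T) (hy : y ∈ Icc (0:ℝ) 1) :
    DifferentiableAt ℝ (fun s => F s y) t := by
  have hdiff := hF.differentiableOn one_ne_zero
  have hmemp : ((t, y) : ℝ × ℝ) ∈ Icc 0 T ×ˢ Icc (0:ℝ) 1 := ⟨Ioo_subset_Icc_self ht, hy⟩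
  have h := (hdiff _ hmemp).hasFDerivWithinAt
  have hc : HasDerivWithinAt (fun s => ((s, y) : ℝ × ℝ)) ((1:ℝ), (0:ℝ)) (Icc 0 T) t :=
    (HasDerivAt.prodMk (hasDerivAt_id t) (hasDerivAt_const t y)).hasDerivWithinAt
  have hcomp := h.comp_hasDerivWithinAt (f := fun s => ((s, y) : ℝ × ℝ)) t hc
    (fun s hs => mk_mem_prod hs hy)
  exact (hcomp.hasDerivAt (Icc_mem_nhds ht.1 ht.2)).differentiableAt

set_option maxHeartbeats 2000000 in
/-- If `ρ₀` is nonincreasing on `[1/2,1]` and `ω₀ ≡ 0` on `[1/2,1]`, and the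
characteristics do not cross, then `ω(t,·) ≤ 0` on `[φ_t(1/2),1]` and
`t ↦ φ_t(1/2)` is nondecreasing. -/
theorem omega_sign_and_monotone (T : ℝ) (hT : 0 ≤ T) (ω ρ : ℝ → ℝ → ℝ)
    (hsol : IsClassicalSolution ω ρ (Icc 0 T))
    (hρ₀ : AntitoneOn (fun x => ρ 0 x) (Icc (1/2 : ℝ) 1))
    (hω₀ : ∀ x ∈ Icc (1/2 : ℝ) 1, ω 0 x = 0)
    (φ : ℝ → ℝ → ℝ)
    (hφ0 : ∀ x ∈ Icc (0:ℝ) 1, φ 0 x = x)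
    (hφ : ∀ x ∈ Icc (0:ℝ) 1, ∀ t ∈ Icc (0:ℝ) T,
      HasDerivAt (fun s => φ s x) (uF ω t (φ t x)) t)
    (hnocross : ∀ t ∈ Icc (0:ℝ) T, StrictMonoOn (fun x => φ t x) (Icc (0:ℝ) 1)) :
    (∀ t ∈ Icc (0:ℝ) T, ∀ x ∈ Icc (φ t (1/2)) 1, ω t x ≤ 0) ∧
    MonotoneOn (fun t => φ t (1/2)) (Icc (0:ℝ) T) := by
  obtain ⟨hωcd, hρcd, hpde⟩ := hsol
  -- continuity of the data
  have hωc : ContinuousOn (fun p : ℝ × ℝ => ω p.1 p.2) (Icc 0 T ×ˢ Icc (0:ℝ) 1) :=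
    hωcd.continuousOn
  have hρc : ContinuousOn (fun p : ℝ × ℝ => ρ p.1 p.2) (Icc 0 T ×ˢ Icc (0:ℝ) 1) :=
    hρcd.continuousOn
  have hcompact : IsCompact (Icc (0:ℝ) T ×ˢ Icc (0:ℝ) 1) := isCompact_Icc.prod isCompact_Icc
  obtain ⟨C, hC⟩ := hcompact.exists_bound_of_continuousOn hωc
  set M : ℝ := max C 0 with hMdef
  have hM0 : 0 ≤ M := le_max_right _ _
  have hMb : ∀ t ∈ Icc (0:ℝ) T, ∀ y ∈ Icc (0:ℝ) 1, |ω t y| ≤ M := by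
    intro t ht y hy
    have := hC (t, y) (mk_mem_prod ht hy)
    rw [Real.norm_eq_abs] at this
    exact le_trans this (le_max_left _ _)
  set Kc : ℝ := M + 1 with hKcdef
  have hKc0 : 0 < Kc := by positivity
  -- slice continuity
  have hωslice : ∀ t ∈ Icc (0:ℝ) T, ContinuousOn (fun z => ω t z) (Icc (0:ℝ) 1) := by
    intro t ht
    have hc : ContinuousOn (fun z => ((t, z) : ℝ × ℝ)) (Icc (0:ℝ) 1) :=
      (continuous_const.prodMk continuous_id).continuousOn
    exact hωc.comp hc (fun z hz => mk_mem_prod ht hz)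
  have hρslice : ∀ t ∈ Icc (0:ℝ) T, ContinuousOn (fun z => ρ t z) (Icc (0:ℝ) 1) := by
    intro t ht
    have hc : ContinuousOn (fun z => ((t, z) : ℝ × ℝ)) (Icc (0:ℝ) 1) :=
      (continuous_const.prodMk continuous_id).continuousOn
    exact hρc.comp hc (fun z hz => mk_mem_prod ht hz)
  -- integrability of the vorticity integrand
  have hInt : ∀ t ∈ Icc (0:ℝ) T, ∀ a b : ℝ, 0 < a → a ≤ b → b ≤ 1 →
      IntervalIntegrable (fun z => ω t z / z) volume a b := by
    intro t ht a b ha hab hb1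
    apply ContinuousOn.intervalIntegrable_of_Icc hab
    apply ContinuousOn.div
    · exact (hωslice t ht).mono (fun z hz => ⟨by linarith [hz.1], by linarith [hz.2]⟩)
    · exact continuousOn_id
    · intro z hz; exact ne_of_gt (lt_of_lt_of_le ha hz.1)
  -- bounds on Omega
  have hΩ1 : ∀ t ∈ Icc (0:ℝ) T, ∀ y : ℝ, 0 < y → y ≤ 1 →
      |OmegaF ω t y| ≤ M / y * (1 - y) := by
    intro t ht y hy0 hy1
    have h := intervalIntegral.norm_integral_le_of_norm_le_const
      (C := M / y) (f := fun z => ω t z / z) (a := y) (b := 1) ?_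
    · rw [Real.norm_eq_abs] at h
      calc |OmegaF ω t y| ≤ M / y * |1 - y| := h
        _ = M / y * (1 - y) := by rw [abs_of_nonneg (by linarith)]
    · intro z hz
      rw [uIoc_of_le hy1] at hz
      have hz0 : 0 < z := lt_trans hy0 hz.1
      rw [Real.norm_eq_abs, abs_div, abs_of_pos hz0]
      have h1 : |ω t z| ≤ M := hMb t ht z ⟨hz0.le, hz.2⟩
      have h2 : M / z ≤ M / y := by gcongr; exact hz.1.le
      have h3 : |ω t z| ≤ M := hMb t ht z ⟨hz0.le, hz.2⟩
      calc |ω t z| / z ≤ M / z := by gcongr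
        _ ≤ M / y := h2
  have hΩ2 : ∀ t ∈ Icc (0:ℝ) T, ∀ y : ℝ, 0 < y → y ≤ 1 →
      |OmegaF ω t y| ≤ M * Real.log (1/y) := by
    intro t ht y hy0 hy1
    have hzero : (0:ℝ) ∉ uIcc y 1 := by
      rw [uIcc_of_le hy1]
      exact fun h => absurd h.1 (not_le.2 hy0)
    have hlog : (∫ z in y..(1:ℝ), 1/z) = Real.log (1/y) := integral_one_div hzero
    have hnorm : ‖∫ z in y..(1:ℝ), ω t z / z‖ ≤ ∫ z in y..(1:ℝ), ‖ω t z / z‖ :=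
      intervalIntegral.norm_integral_le_integral_norm hy1
    have hint1 : IntervalIntegrable (fun z => ‖ω t z / z‖) volume y 1 :=
      (hInt t ht y 1 hy0 hy1 le_rfl).norm
    have hint2 : IntervalIntegrable (fun z => M * (1/z)) volume y 1 := by
      apply ContinuousOn.intervalIntegrable_of_Icc hy1
      apply ContinuousOn.mul continuousOn_const
      exact ContinuousOn.div continuousOn_const continuousOn_id
        (fun z hz => ne_of_gt (lt_of_lt_of_le hy0 hz.1))
    have hmono : (∫ z in y..(1:ℝ), ‖ω t z / z‖) ≤ ∫ z in y..(1:ℝ), M * (1/z) := by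
      apply intervalIntegral.integral_mono_on hy1 hint1 hint2
      intro z hz
      have hz0 : 0 < z := lt_of_lt_of_le hy0 hz.1
      rw [Real.norm_eq_abs, abs_div, abs_of_pos hz0, mul_one_div]
      have h3 : |ω t z| ≤ M := hMb t ht z ⟨hz0.le, hz.2⟩
      gcongr
    have hfin : (∫ z in y..(1:ℝ), M * (1/z)) = M * Real.log (1/y) := by
      rw [intervalIntegral.integral_const_mul, hlog]
    calc |OmegaF ω t y| = ‖∫ z in y..(1:ℝ), ω t z / z‖ := (Real.norm_eq_abs _).symm
      _ ≤ ∫ z in y..(1:ℝ), ‖ω t z / z‖ := hnorm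
      _ ≤ ∫ z in y..(1:ℝ), M * (1/z) := hmono
      _ = M * Real.log (1/y) := hfin
  have hu1 : ∀ t ∈ Icc (0:ℝ) T, ∀ y : ℝ, 0 < y → y ≤ 1 →
      |uF ω t y| ≤ M * (1 - y) := by
    intro t ht y hy0 hy1
    have h1 : |uF ω t y| = y * |OmegaF ω t y| := by
      rw [uF, abs_mul, abs_neg, abs_of_pos hy0]
    rw [h1]
    have h2 := hΩ1 t ht y hy0 hy1
    have h3 : y * |OmegaF ω t y| ≤ y * (M / y * (1 - y)) :=
      mul_le_mul_of_nonneg_left h2 hy0.le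
    have h4 : y * (M / y * (1 - y)) = M * (1 - y) := by field_simp
    linarith
  have hu2 : ∀ t ∈ Icc (0:ℝ) T, ∀ y : ℝ, 0 < y → y ≤ 1 →
      |uF ω t y| ≤ M * (y * Real.log (1/y)) := by
    intro t ht y hy0 hy1
    have h1 : |uF ω t y| = y * |OmegaF ω t y| := by
      rw [uF, abs_mul, abs_neg, abs_of_pos hy0]
    rw [h1]
    have h2 := hΩ2 t ht y hy0 hy1
    have h3 : y * |OmegaF ω t y| ≤ y * (M * Real.log (1/y)) :=
      mul_le_mul_of_nonneg_left h2 hy0.le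
    linarith [h3]
  -- barrier box for the flow
  have hbox : ∀ x ∈ Ico (1/2:ℝ) 1, ∀ t ∈ Icc (0:ℝ) T,
      Real.exp (-((Real.log (1/x) + 1) * Real.exp (Kc*t))) < φ t x ∧
      1 - 2*(1-x)*Real.exp (Kc*t) < φ t x ∧
      φ t x < 1 - (1-x)*Real.exp (-(Kc*t))/2 := by
    intro x hx
    have hx0 : (0:ℝ) < x := by linarith [hx.1]
    have hx1 : x < 1 := hx.2
    have hx01 : x ∈ Icc (0:ℝ) 1 := ⟨hx0.le, hx1.le⟩
    set cx := Real.log (1/x) + 1 with hcxdef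
    have hlogx : Real.log (1/x) = -Real.log x := by rw [one_div, Real.log_inv]
    have hcx0 : 0 < cx := by
      have h5 : 0 ≤ Real.log (1/x) := Real.log_nonneg (by rw [le_div_iff₀ hx0]; linarith)
      rw [hcxdef]; linarith
    have hKt : ∀ s:ℝ, HasDerivAt (fun r => Kc*r) Kc s := fun s => by
      simpa using (hasDerivAt_id s).const_mul Kc
    have hexpKt : ∀ s:ℝ, HasDerivAt (fun r => Real.exp (Kc*r)) (Real.exp (Kc*s) * Kc) s :=
      fun s => (hKt s).exp
    have hbd : ∀ s:ℝ, HasDerivAt (fun r => Real.exp (-(cx * Real.exp (Kc*r))))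
        (Real.exp (-(cx * Real.exp (Kc*s))) * -(cx * (Real.exp (Kc*s) * Kc))) s :=
      fun s => (((hexpKt s).const_mul cx).neg).exp
    have hld : ∀ s:ℝ, HasDerivAt (fun r => 1 - 2*(1-x)*Real.exp (Kc*r))
        (-(2*(1-x)*(Real.exp (Kc*s) * Kc))) s :=
      fun s => ((hexpKt s).const_mul (2*(1-x))).const_sub 1
    have hBd : ∀ s:ℝ, HasDerivAt (fun r => 1 - (1-x)*Real.exp (-(Kc*r))/2)
        (-((1-x)*(Real.exp (-(Kc*s)) * -Kc)/2)) s :=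
      fun s => ((((hKt s).neg).exp.const_mul (1-x)).div_const 2).const_sub 1
    have h0b : Real.exp (-(cx * Real.exp (Kc*0))) < φ 0 x := by
      rw [hφ0 x hx01, mul_zero, Real.exp_zero, mul_one]
      have h5 : Real.exp (-cx) < Real.exp (Real.log x) := by
        apply Real.exp_lt_exp.2
        rw [hcxdef, hlogx]
        linarith
      rwa [Real.exp_log hx0] at h5
    have h0l : 1 - 2*(1-x)*Real.exp (Kc*0) < φ 0 x := by
      rw [hφ0 x hx01, mul_zero, Real.exp_zero, mul_one]
      linarith
    have h0B : φ 0 x < 1 - (1-x)*Real.exp (-(Kc*0))/2 := by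
      rw [hφ0 x hx01, mul_zero, neg_zero, Real.exp_zero, mul_one]
      linarith
    have hBlt1 : ∀ s:ℝ, 1 - (1-x)*Real.exp (-(Kc*s))/2 < 1 := by
      intro s
      have := Real.exp_pos (-(Kc*s))
      nlinarith
    refine barrier (fun t ht => hφ x hx01 t ht) hbd hld hBd h0b h0l h0B ?_ ?_ ?_
    · -- lower exponential barrier contact
      intro t ht hble hlle hleB heq
      have hy0 : 0 < φ t x := by rw [heq]; exact Real.exp_pos _
      have hy1 : φ t x < 1 := lt_of_le_of_lt hleB (hBlt1 t)
      have habs := hu2 t ht (φ t x) hy0 hy1.le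
      have h1 : -(M * (φ t x * Real.log (1/(φ t x)))) ≤ uF ω t (φ t x) := (abs_le.1 habs).1
      have hlogy : Real.log (1/(φ t x)) = cx * Real.exp (Kc*t) := by
        rw [heq, one_div, Real.log_inv, Real.log_exp, neg_neg]
      rw [hlogy] at h1
      have hApos : 0 < cx * Real.exp (Kc*t) := mul_pos hcx0 (Real.exp_pos _)
      rw [← heq]
      nlinarith [mul_pos hy0 hApos]
    · -- lower linear barrier contact
      intro t ht hble hlle hleB heq
      have hy0 : 0 < φ t x := lt_of_lt_of_le (Real.exp_pos _) hble
      have hy1 : φ t x < 1 := lt_of_le_of_lt hleB (hBlt1 t)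
      have habs := hu1 t ht (φ t x) hy0 hy1.le
      have h1 : -(M * (1 - φ t x)) ≤ uF ω t (φ t x) := (abs_le.1 habs).1
      have h2 : 2*(1-x)*Real.exp (Kc*t) = 1 - φ t x := by rw [heq]; ring
      have h3 : 0 < 1 - φ t x := by linarith
      nlinarith [mul_pos h3 hKc0]
    · -- upper barrier contact
      intro t ht hble hlle hleB heq
      have hy0 : 0 < φ t x := lt_of_lt_of_le (Real.exp_pos _) hble
      have hy1 : φ t x < 1 := by rw [heq]; exact hBlt1 t
      have habs := hu1 t ht (φ t x) hy0 hy1.le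
      have h1 : uF ω t (φ t x) ≤ M * (1 - φ t x) := (abs_le.1 habs).2
      have h2 : (1-x)*Real.exp (-(Kc*t))/2 = 1 - φ t x := by rw [heq]; ring
      have h3 : 0 < 1 - φ t x := by linarith
      nlinarith [mul_pos h3 hKc0]
  -- uniform lower bound for the flow
  set dlt : ℝ := Real.exp (-((Real.log 2 + 1) * Real.exp (Kc*T))) with hdltdef
  have hdlt0 : 0 < dlt := Real.exp_pos _
  have hlog2 : (0:ℝ) ≤ Real.log 2 := Real.log_nonneg one_le_two
  have hdlt1 : dlt ≤ 1 := by
    rw [hdltdef]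
    apply Real.exp_le_one_iff.2
    have := Real.exp_pos (Kc*T)
    nlinarith
  have hmem : ∀ x ∈ Ico (1/2:ℝ) 1, ∀ t ∈ Icc (0:ℝ) T, dlt < φ t x ∧ φ t x < 1 := by
    intro x hx t ht
    obtain ⟨hb, hl, hB⟩ := hbox x hx t ht
    have hx0 : (0:ℝ) < x := by linarith [hx.1]
    constructor
    · refine lt_of_le_of_lt ?_ hb
      rw [hdltdef]
      apply Real.exp_le_exp.2
      rw [neg_le_neg_iff]
      have h1 : Real.log (1/x) ≤ Real.log 2 := by
        apply Real.log_le_log (by positivity)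
        rw [div_le_iff₀ hx0]; linarith [hx.1]
      have h2 : Real.exp (Kc*t) ≤ Real.exp (Kc*T) :=
        Real.exp_le_exp.2 (mul_le_mul_of_nonneg_left ht.2 hKc0.le)
      have h3 : 0 ≤ Real.log (1/x) := Real.log_nonneg (by rw [le_div_iff₀ hx0]; linarith [hx.2])
      nlinarith [Real.exp_pos (Kc*t)]
    · have h4 : 1 - (1-x)*Real.exp (-(Kc*t))/2 < 1 := by
        have := Real.exp_pos (-(Kc*t))
        nlinarith [hx.2]
      linarith
  -- clamped-time velocity field and its Lipschitz property on [dlt,1]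
  set tc : ℝ → ℝ := fun s => max 0 (min s T) with htcdef
  have htc : ∀ s ∈ Icc (0:ℝ) T, tc s = s := by
    intro s hs
    rw [htcdef]
    simp only [min_eq_left hs.2, max_eq_right hs.1]
  have htcmem : ∀ s, tc s ∈ Icc (0:ℝ) T := fun s =>
    ⟨le_max_left _ _, max_le hT (min_le_right _ _)⟩
  set L0 : ℝ := M / dlt + M * Real.log (1/dlt) with hL0def
  have hlogdlt : 0 ≤ Real.log (1/dlt) := Real.log_nonneg (by rw [le_div_iff₀ hdlt0]; linarith)
  have hL00 : 0 ≤ L0 := by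
    rw [hL0def]
    have h1 : 0 ≤ M / dlt := by positivity
    nlinarith
  have key : ∀ t' ∈ Icc (0:ℝ) T, ∀ a b : ℝ, dlt ≤ a → a ≤ b → b ≤ 1 →
      |uF ω t' a - uF ω t' b| ≤ L0 * (b - a) := by
    intro t' ht' a b hda hab hb1
    have ha0 : 0 < a := lt_of_lt_of_le hdlt0 hda
    have hb0 : 0 < b := lt_of_lt_of_le ha0 hab
    have hsplit : OmegaF ω t' a = (∫ z in a..b, ω t' z / z) + OmegaF ω t' b := by
      rw [OmegaF, OmegaF,
        ← intervalIntegral.integral_add_adjacent_intervals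
          (hInt t' ht' a b ha0 hab hb1) (hInt t' ht' b 1 hb0 hb1 le_rfl)]
    have hI : |∫ z in a..b, ω t' z / z| ≤ M / dlt * (b - a) := by
      have h := intervalIntegral.norm_integral_le_of_norm_le_const
        (C := M/dlt) (f := fun z => ω t' z / z) (a := a) (b := b) ?_
      · rw [Real.norm_eq_abs, abs_of_nonneg (by linarith : (0:ℝ) ≤ b - a)] at h
        exact h
      · intro z hz
        rw [uIoc_of_le hab] at hz
        have hz0 : 0 < z := lt_trans ha0 hz.1
        rw [Real.norm_eq_abs, abs_div, abs_of_pos hz0]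
        have h3 : |ω t' z| ≤ M := hMb t' ht' z ⟨hz0.le, le_trans hz.2 hb1⟩
        have h4 : dlt ≤ z := le_trans hda hz.1.le
        calc |ω t' z| / z ≤ M / z := by gcongr
          _ ≤ M / dlt := by gcongr
    have hΩb : |OmegaF ω t' b| ≤ M * Real.log (1/dlt) := by
      have h5 := hΩ2 t' ht' b hb0 hb1
      have h6 : Real.log (1/b) ≤ Real.log (1/dlt) := by
        apply Real.log_le_log (by positivity)
        exact one_div_le_one_div_of_le hdlt0 (le_trans hda hab)
      linarith [mul_le_mul_of_nonneg_left h6 hM0]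
    have hexp2 : uF ω t' a - uF ω t' b
        = -(a * (∫ z in a..b, ω t' z / z)) + (b - a) * OmegaF ω t' b := by
      rw [uF, uF, hsplit]; ring
    rw [hexp2]
    have ha1 : a ≤ 1 := le_trans hab hb1
    calc |-(a * (∫ z in a..b, ω t' z / z)) + (b - a) * OmegaF ω t' b|
        ≤ |-(a * (∫ z in a..b, ω t' z / z))| + |(b - a) * OmegaF ω t' b| := abs_add_le _ _
      _ = a * |∫ z in a..b, ω t' z / z| + (b - a) * |OmegaF ω t' b| := by
          rw [abs_neg, abs_mul, abs_mul, abs_of_pos ha0,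
            abs_of_nonneg (by linarith : (0:ℝ) ≤ b - a)]
      _ ≤ 1 * (M / dlt * (b - a)) + (b - a) * (M * Real.log (1/dlt)) := by
          apply add_le_add
          · exact mul_le_mul ha1 hI (abs_nonneg _) one_pos.le
          · exact mul_le_mul_of_nonneg_left hΩb (by linarith)
      _ = L0 * (b - a) := by rw [hL0def]; ring
  have hlip : ∀ s : ℝ, LipschitzOnWith (Real.toNNReal L0)
      (fun y => uF ω (tc s) y) (Icc dlt 1) := by
    intro s
    apply LipschitzOnWith.of_dist_le_mul
    intro p hp q hq
    rw [Real.dist_eq, Real.dist_eq, Real.coe_toNNReal _ hL00]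
    rcases le_total p q with h | h
    · have h7 := key (tc s) (htcmem s) p q hp.1 h hq.2
      rw [abs_of_nonpos (by linarith : p - q ≤ 0)]
      linarith
    · have h7 := key (tc s) (htcmem s) q p hq.1 h hp.2
      rw [abs_sub_comm] at h7
      rw [abs_of_nonneg (by linarith : (0:ℝ) ≤ p - q)]
      linarith
  -- Lipschitz dependence of the flow on the starting point
  have hflow : ∀ x ∈ Ico (1/2:ℝ) 1, ∀ x' ∈ Ico (1/2:ℝ) 1, ∀ t ∈ Icc (0:ℝ) T,
      dist (φ t x) (φ t x') ≤ dist x x' * Real.exp (L0 * t) := by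
    intro x hx x' hx' t ht
    have hx01 : x ∈ Icc (0:ℝ) 1 := ⟨by linarith [hx.1], hx.2.le⟩
    have hx'01 : x' ∈ Icc (0:ℝ) 1 := ⟨by linarith [hx'.1], hx'.2.le⟩
    have h := dist_le_of_trajectories_ODE_of_mem (v := fun s y => uF ω (tc s) y)
      (s := fun _ => Icc dlt 1) (K := Real.toNNReal L0)
      (f := fun s => φ s x) (g := fun s => φ s x') (a := 0) (b := T) (δ := dist x x')
      (fun s _ => hlip s)
      (fun s hs => ((hφ x hx01 s hs).continuousAt).continuousWithinAt)
      (fun s hs => by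
        have hs' : s ∈ Icc (0:ℝ) T := ⟨hs.1, hs.2.le⟩
        show HasDerivWithinAt (fun r => φ r x) (uF ω (tc s) (φ s x)) (Ici s) s
        rw [htc s hs']
        exact (hφ x hx01 s hs').hasDerivWithinAt)
      (fun s hs => by
        have hs' : s ∈ Icc (0:ℝ) T := ⟨hs.1, hs.2.le⟩
        exact ⟨(hmem x hx s hs').1.le, (hmem x hx s hs').2.le⟩)
      (fun s hs => ((hφ x' hx'01 s hs).continuousAt).continuousWithinAt)
      (fun s hs => by
        have hs' : s ∈ Icc (0:ℝ) T := ⟨hs.1, hs.2.le⟩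
        show HasDerivWithinAt (fun r => φ r x') (uF ω (tc s) (φ s x')) (Ici s) s
        rw [htc s hs']
        exact (hφ x' hx'01 s hs').hasDerivWithinAt)
      (fun s hs => by
        have hs' : s ∈ Icc (0:ℝ) T := ⟨hs.1, hs.2.le⟩
        exact ⟨(hmem x' hx' s hs').1.le, (hmem x' hx' s hs').2.le⟩)
      (by
        show dist (φ 0 x) (φ 0 x') ≤ dist x x'
        rw [hφ0 x hx01, hφ0 x' hx'01]) t ht
    rw [Real.coe_toNNReal _ hL00, sub_zero] at h
    exact h
  have h12Ico : (1/2:ℝ) ∈ Ico (1/2:ℝ) 1 := ⟨le_rfl, by norm_num⟩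
  have h12Icc : (1/2:ℝ) ∈ Icc (0:ℝ) 1 := ⟨by norm_num, by norm_num⟩
  -- coverage of [φ_t(1/2), 1) by the characteristics
  have hcov : ∀ t ∈ Icc (0:ℝ) T, ∀ y : ℝ, φ t (1/2) ≤ y → y < 1 →
      ∃ x, x ∈ Ico (1/2:ℝ) 1 ∧ φ t x = y := by
    intro t ht y hy1 hy2
    have hydlt : dlt < y := lt_of_lt_of_le (hmem (1/2) h12Ico t ht).1 hy1
    set x1 : ℝ := 1 - (1-y)*Real.exp (-(Kc*t))/4 with hx1def
    have hE : 0 < Real.exp (-(Kc*t)) := Real.exp_pos _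
    have hE1 : Real.exp (-(Kc*t)) ≤ 1 := by
      apply Real.exp_le_one_iff.2
      nlinarith [ht.1]
    have hy0 : 0 < 1 - y := by linarith
    have hx1a : (1/2:ℝ) ≤ x1 := by
      rw [hx1def]
      nlinarith
    have hx1b : x1 < 1 := by rw [hx1def]; nlinarith
    have hx1Ico : x1 ∈ Ico (1/2:ℝ) 1 := ⟨hx1a, hx1b⟩
    have hEE : Real.exp (-(Kc*t)) * Real.exp (Kc*t) = 1 := by
      rw [← Real.exp_add]; simp
    have hlt : y < φ t x1 := by
      refine lt_of_le_of_lt ?_ (hbox x1 hx1Ico t ht).2.1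
      have h8 : 2*(1-x1)*Real.exp (Kc*t) = (1-y)/2 := by
        rw [hx1def]
        have : (1 - (1 - (1-y)*Real.exp (-(Kc*t))/4)) = (1-y)*Real.exp (-(Kc*t))/4 := by ring
        rw [this]
        calc 2*((1-y)*Real.exp (-(Kc*t))/4)*Real.exp (Kc*t)
            = (1-y)*(Real.exp (-(Kc*t))*Real.exp (Kc*t))/2 := by ring
          _ = (1-y)/2 := by rw [hEE]; ring
      rw [h8]
      linarith
    have hcont : ContinuousOn (fun z => φ t z) (Icc (1/2:ℝ) x1) := by
      have hLip : LipschitzOnWith (Real.toNNReal (Real.exp (L0*T)))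
          (fun z => φ t z) (Ico (1/2:ℝ) 1) := by
        apply LipschitzOnWith.of_dist_le_mul
        intro p hp q hq
        rw [Real.coe_toNNReal _ (Real.exp_pos _).le]
        have h9 := hflow p hp q hq t ht
        have h10 : Real.exp (L0*t) ≤ Real.exp (L0*T) :=
          Real.exp_le_exp.2 (mul_le_mul_of_nonneg_left ht.2 hL00)
        nlinarith [(dist_nonneg : (0:ℝ) ≤ dist p q), (dist_nonneg : (0:ℝ) ≤ dist (φ t p) (φ t q))]
      exact (hLip.continuousOn).mono
        (fun z hz => ⟨hz.1, lt_of_le_of_lt hz.2 hx1b⟩)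
    have hIVT := intermediate_value_Icc hx1a hcont
    obtain ⟨x, hxmem, hxeq⟩ := hIVT ⟨hy1, hlt.le⟩
    exact ⟨x, ⟨hxmem.1, lt_of_le_of_lt hxmem.2 hx1b⟩, hxeq⟩
  -- transport of the density along characteristics
  have htrans : ∀ x ∈ Ico (1/2:ℝ) 1, ∀ t ∈ Icc (0:ℝ) T, ρ t (φ t x) = ρ 0 x := by
    intro x hx t ht
    have hx01 : x ∈ Icc (0:ℝ) 1 := ⟨by linarith [hx.1], hx.2.le⟩
    have hFcont : ContinuousOn (fun s => ρ s (φ s x)) (Icc (0:ℝ) T) := by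
      have hcur : ContinuousOn (fun s => ((s, φ s x) : ℝ × ℝ)) (Icc (0:ℝ) T) :=
        fun s hs => (continuousAt_id.prodMk ((hφ x hx01 s hs).continuousAt)).continuousWithinAt
      exact hρc.comp hcur (fun s hs => mk_mem_prod hs
        ⟨(hdlt0.trans (hmem x hx s hs).1).le, (hmem x hx s hs).2.le⟩)
    have hFd : ∀ s ∈ interior (Icc (0:ℝ) T), HasDerivAt (fun r => ρ r (φ r x)) 0 s := by
      intro s hs
      rw [interior_Icc] at hs
      have hsIcc : s ∈ Icc (0:ℝ) T := Ioo_subset_Icc_self hs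
      have hφmem : φ s x ∈ Ioo (0:ℝ) 1 :=
        ⟨hdlt0.trans (hmem x hx s hsIcc).1, (hmem x hx s hsIcc).2⟩
      have h := hasDerivAt_comp_curve hρcd hs hφmem (hφ x hx01 s hsIcc)
      have h' : HasDerivAt (fun r => ρ r (φ r x))
          (deriv (fun r => ρ r (φ s x)) s
            + uF ω s (φ s x) * deriv (fun yy => ρ s yy) (φ s x)) s := h
      have hzero := (hpde s hsIcc (φ s x) ⟨hφmem.1.le, hφmem.2.le⟩).1
      rw [hzero] at h'
      exact h'
    have hmono2 := monotoneOn_of_deriv_nonneg (convex_Icc (0:ℝ) T) hFcont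
      (fun s hs => (hFd s hs).differentiableAt.differentiableWithinAt)
      (fun s hs => le_of_eq ((hFd s hs).deriv).symm)
    have hanti2 := antitoneOn_of_deriv_nonpos (convex_Icc (0:ℝ) T) hFcont
      (fun s hs => (hFd s hs).differentiableAt.differentiableWithinAt)
      (fun s hs => le_of_eq ((hFd s hs).deriv))
    have h0T : (0:ℝ) ∈ Icc (0:ℝ) T := ⟨le_rfl, hT⟩
    have e1 : ρ 0 (φ 0 x) ≤ ρ t (φ t x) := hmono2 h0T ht ht.1
    have e2 : ρ t (φ t x) ≤ ρ 0 (φ 0 x) := hanti2 h0T ht ht.1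
    have e3 : ρ t (φ t x) = ρ 0 (φ 0 x) := le_antisymm e2 e1
    rw [e3, hφ0 x hx01]
  -- the density is monotone on the moving interval
  have hρmono : ∀ t ∈ Icc (0:ℝ) T, ∀ y z : ℝ,
      φ t (1/2) ≤ y → y ≤ z → z < 1 → ρ t z ≤ ρ t y := by
    intro t ht y z hy hyz hz1
    obtain ⟨xy, hxyI, hxyeq⟩ := hcov t ht y hy (lt_of_le_of_lt hyz hz1)
    obtain ⟨xz, hxzI, hxzeq⟩ := hcov t ht z (le_trans hy hyz) hz1
    have hxy01 : xy ∈ Icc (0:ℝ) 1 := ⟨by linarith [hxyI.1], hxyI.2.le⟩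
    have hxz01 : xz ∈ Icc (0:ℝ) 1 := ⟨by linarith [hxzI.1], hxzI.2.le⟩
    have hle : xy ≤ xz := by
      by_contra hq
      push_neg at hq
      have h2 : φ t xz < φ t xy := hnocross t ht hxz01 hxy01 hq
      rw [hxzeq, hxyeq] at h2
      linarith
    have h3 : ρ 0 xz ≤ ρ 0 xy := hρ₀ ⟨hxyI.1, hxyI.2.le⟩ ⟨hxzI.1, hxzI.2.le⟩ hle
    calc ρ t z = ρ 0 xz := by rw [← hxzeq]; exact htrans xz hxzI t ht
      _ ≤ ρ 0 xy := h3
      _ = ρ t y := by rw [← hxyeq]; exact (htrans xy hxyI t ht).symm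
  have hρ1le : ∀ t ∈ Icc (0:ℝ) T, ∀ y : ℝ, φ t (1/2) ≤ y → y < 1 → ρ t 1 ≤ ρ t y := by
    intro t ht y hy hy1
    have hne : (𝓝[Ioo y (1:ℝ)] (1:ℝ)).NeBot := right_nhdsWithin_Ioo_neBot hy1
    have hydlt : dlt < y := lt_of_lt_of_le (hmem (1/2) h12Ico t ht).1 hy
    have hsub : Ioo y (1:ℝ) ⊆ Icc (0:ℝ) 1 :=
      fun z hz => ⟨by linarith [hz.1, hdlt0], hz.2.le⟩
    have hcw : ContinuousWithinAt (fun z => ρ t z) (Icc (0:ℝ) 1) 1 :=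
      (hρslice t ht) 1 ⟨zero_le_one, le_rfl⟩
    have htd : Tendsto (fun z => ρ t z) (𝓝[Ioo y (1:ℝ)] 1) (𝓝 (ρ t 1)) :=
      hcw.mono_left (nhdsWithin_mono _ hsub)
    apply le_of_tendsto htd
    filter_upwards [self_mem_nhdsWithin] with z hz
    exact hρmono t ht y z hy hz.1.le hz.2
  -- sign of the x-derivative of the density
  have hdρ : ∀ t ∈ Ioo (0:ℝ) T, ∀ y : ℝ, φ t (1/2) ≤ y → y < 1 →
      deriv (fun z => ρ t z) y ≤ 0 := by
    intro t ht y hy hy1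
    have htIcc : t ∈ Icc (0:ℝ) T := Ioo_subset_Icc_self ht
    have hyIoo : y ∈ Ioo (0:ℝ) 1 :=
      ⟨hdlt0.trans (lt_of_lt_of_le (hmem _ h12Ico t htIcc).1 hy), hy1⟩
    have hder := hasDerivAt_slice_x hρcd ht hyIoo
    exact deriv_nonpos_right hder hy1 (fun z hz => hρmono t htIcc y z hy hz.1.le hz.2)
  have hdρ1 : ∀ t ∈ Ioo (0:ℝ) T, deriv (fun z => ρ t z) 1 ≤ 0 := by
    intro t ht
    have htIcc : t ∈ Icc (0:ℝ) T := Ioo_subset_Icc_self ht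
    by_cases hdiff : DifferentiableAt ℝ (fun z => ρ t z) 1
    · have hψ1 : φ t (1/2) < 1 := (hmem _ h12Ico t htIcc).2
      exact deriv_nonpos_left hdiff.hasDerivAt hψ1
        (fun z hz => hρ1le t htIcc z hz.1.le hz.2)
    · rw [deriv_zero_of_not_differentiableAt hdiff]
  -- sign of the vorticity along characteristics
  have hωchar : ∀ x ∈ Ico (1/2:ℝ) 1, ∀ t ∈ Icc (0:ℝ) T, ω t (φ t x) ≤ 0 := by
    intro x hx t ht
    have hx01 : x ∈ Icc (0:ℝ) 1 := ⟨by linarith [hx.1], hx.2.le⟩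
    have hGcont : ContinuousOn (fun s => ω s (φ s x)) (Icc (0:ℝ) T) := by
      have hcur : ContinuousOn (fun s => ((s, φ s x) : ℝ × ℝ)) (Icc (0:ℝ) T) :=
        fun s hs => (continuousAt_id.prodMk ((hφ x hx01 s hs).continuousAt)).continuousWithinAt
      exact hωc.comp hcur (fun s hs => mk_mem_prod hs
        ⟨(hdlt0.trans (hmem x hx s hs).1).le, (hmem x hx s hs).2.le⟩)
    have hGd : ∀ s ∈ interior (Icc (0:ℝ) T),
        HasDerivAt (fun r => ω r (φ r x)) (deriv (fun z => ρ s z) (φ s x)) s := by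
      intro s hs
      rw [interior_Icc] at hs
      have hsIcc : s ∈ Icc (0:ℝ) T := Ioo_subset_Icc_self hs
      have hφmem : φ s x ∈ Ioo (0:ℝ) 1 :=
        ⟨hdlt0.trans (hmem x hx s hsIcc).1, (hmem x hx s hsIcc).2⟩
      have h := hasDerivAt_comp_curve hωcd hs hφmem (hφ x hx01 s hsIcc)
      have h' : HasDerivAt (fun r => ω r (φ r x))
          (deriv (fun r => ω r (φ s x)) s
            + uF ω s (φ s x) * deriv (fun yy => ω s yy) (φ s x)) s := h
      have hpd := (hpde s hsIcc (φ s x) ⟨hφmem.1.le, hφmem.2.le⟩).2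
      rw [hpd] at h'
      exact h'
    have hanti3 := antitoneOn_of_deriv_nonpos (convex_Icc (0:ℝ) T) hGcont
      (fun s hs => (hGd s hs).differentiableAt.differentiableWithinAt)
      (fun s hs => by
        rw [(hGd s hs).deriv]
        rw [interior_Icc] at hs
        have hsIcc : s ∈ Icc (0:ℝ) T := Ioo_subset_Icc_self hs
        have hge : φ s (1/2) ≤ φ s x :=
          (hnocross s hsIcc).monotoneOn h12Icc hx01 (by linarith [hx.1])
        exact hdρ s hs (φ s x) hge (hmem x hx s hsIcc).2)
    have h0T : (0:ℝ) ∈ Icc (0:ℝ) T := ⟨le_rfl, hT⟩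
    have h2 : ω t (φ t x) ≤ ω 0 (φ 0 x) := hanti3 h0T ht ht.1
    have hG0 : ω 0 (φ 0 x) = 0 := by
      rw [hφ0 x hx01]; exact hω₀ x ⟨hx.1, hx.2.le⟩
    linarith
  -- sign of the vorticity at the right endpoint
  have hω1le : ∀ t ∈ Icc (0:ℝ) T, ω t 1 ≤ 0 := by
    intro t ht
    have hHcont : ContinuousOn (fun s => ω s 1) (Icc (0:ℝ) T) := by
      have hcur : ContinuousOn (fun s => ((s, (1:ℝ)) : ℝ × ℝ)) (Icc (0:ℝ) T) :=
        (continuous_id.prodMk continuous_const).continuousOn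
      exact hωc.comp hcur (fun s hs => mk_mem_prod hs ⟨zero_le_one, le_rfl⟩)
    have hHd : ∀ s ∈ interior (Icc (0:ℝ) T),
        HasDerivAt (fun r => ω r 1) (deriv (fun z => ρ s z) 1) s := by
      intro s hs
      rw [interior_Icc] at hs
      have hsIcc : s ∈ Icc (0:ℝ) T := Ioo_subset_Icc_self hs
      have hdiff := diff_slice_t hωcd hs ⟨zero_le_one, le_rfl⟩
      have h := hdiff.hasDerivAt
      have hpd := (hpde s hsIcc 1 ⟨zero_le_one, le_rfl⟩).2
      have hu0 : uF ω s 1 = 0 := by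
        rw [uF, OmegaF, intervalIntegral.integral_same]; ring
      rw [hu0, zero_mul, add_zero] at hpd
      rw [hpd] at h
      exact h
    have hanti4 := antitoneOn_of_deriv_nonpos (convex_Icc (0:ℝ) T) hHcont
      (fun s hs => (hHd s hs).differentiableAt.differentiableWithinAt)
      (fun s hs => by
        rw [(hHd s hs).deriv]
        rw [interior_Icc] at hs
        exact hdρ1 s hs)
    have h2 : ω t 1 ≤ ω 0 1 := hanti4 ⟨le_rfl, hT⟩ ht ht.1
    rw [hω₀ 1 ⟨by norm_num, le_rfl⟩] at h2
    exact h2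
  -- first conclusion
  have part1 : ∀ t ∈ Icc (0:ℝ) T, ∀ y ∈ Icc (φ t (1/2)) 1, ω t y ≤ 0 := by
    intro t ht y hy
    rcases lt_or_eq_of_le hy.2 with h | h
    · obtain ⟨x, hxI, hxeq⟩ := hcov t ht y hy.1 h
      rw [← hxeq]
      exact hωchar x hxI t ht
    · rw [h]
      exact hω1le t ht
  refine ⟨part1, ?_⟩
  -- second conclusion: monotonicity of ψ
  apply monotoneOn_of_deriv_nonneg (convex_Icc (0:ℝ) T)
  · exact fun t ht => ((hφ (1/2) h12Icc t ht).continuousAt).continuousWithinAt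
  · intro t ht
    rw [interior_Icc] at ht
    exact (hφ (1/2) h12Icc t (Ioo_subset_Icc_self ht)).differentiableAt.differentiableWithinAt
  · intro t ht
    rw [interior_Icc] at ht
    have htIcc : t ∈ Icc (0:ℝ) T := Ioo_subset_Icc_self ht
    rw [(hφ (1/2) h12Icc t htIcc).deriv]
    have hψd : dlt < φ t (1/2) := (hmem _ h12Ico t htIcc).1
    have hψ0 : 0 < φ t (1/2) := hdlt0.trans hψd
    have hψ1 : φ t (1/2) < 1 := (hmem _ h12Ico t htIcc).2
    have hΩneg : OmegaF ω t (φ t (1/2)) ≤ 0 := by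
      rw [OmegaF]
      have hint1 : IntervalIntegrable (fun z => ω t z / z) volume (φ t (1/2)) 1 :=
        hInt t htIcc _ 1 hψ0 hψ1.le le_rfl
      have hint2 : IntervalIntegrable (fun _ => (0:ℝ)) volume (φ t (1/2)) 1 :=
        intervalIntegrable_const
      have h5 := intervalIntegral.integral_mono_on hψ1.le hint1 hint2
        (fun z hz => div_nonpos_of_nonpos_of_nonneg
          (part1 t htIcc z ⟨hz.1, hz.2⟩) (le_trans hψ0.le hz.1))
      simpa using h5
    rw [uF]
    nlinarith [hΩneg, hψ0]
end

section
/- For each n ≥ 1 let ψ_n : [0,5) → ℝ be twice continuously differentiable, and assume: ψ_n′(t) ≥ 0 for all n ≥ 1 and t ∈ [0,5); ψ_n(t) ≥ ψ_{n-1}(t) ≥ 0 for all n ≥ 2 and t ∈ [0,5); ψ_n″(t) ≥ 2^{-n} e^{ψ_{n-1}(t)} - 4 for all n ≥ 2 and t ∈ [0,5); and ψ_1(1) ≥ 9. Define t_n = 2 - 2^{1-n} for n ≥ 1. Then ψ_n(t_n) ≥ 3n + 6 for every n ≥ 1; in particular ψ_n(t_n) → ∞ as n → ∞. -/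
open Filter Set

lemma grow_aux (f : ℝ → ℝ) (hf : ContDiffOn ℝ 2 f (Ico (0:ℝ) 5))
    (a b c : ℝ) (h1a : 1 ≤ a) (hab : a ≤ b) (hb2 : b ≤ 2)
    (hfa : 0 ≤ deriv f a)
    (hc : ∀ t ∈ Icc a b, c ≤ deriv (deriv f) t) :
    f a + c / 2 * (b - a) ^ 2 ≤ f b := by
  have hsub : Icc a b ⊆ Ioo (0:ℝ) 5 := fun t ht =>
    ⟨by linarith [ht.1], by linarith [ht.2]⟩
  have hfS : ContDiffOn ℝ 2 f (Ioo (0:ℝ) 5) :=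
    hf.mono (Ioo_subset_Ico_self)
  have hdiff : DifferentiableOn ℝ f (Ioo (0:ℝ) 5) :=
    hfS.differentiableOn (by norm_num)
  have hC1 : ContDiffOn ℝ 1 (deriv f) (Ioo (0:ℝ) 5) := by
    have := (contDiffOn_succ_iff_deriv_of_isOpen (n := 1)
      (f := f) (s := Ioo (0:ℝ) 5) isOpen_Ioo).mp (by exact_mod_cast hfS)
    exact this.2.2
  have hdiff' : DifferentiableOn ℝ (deriv f) (Ioo (0:ℝ) 5) :=
    hC1.differentiableOn one_ne_zero
  have step1 : ∀ t ∈ Icc a b, c * (t - a) ≤ deriv f t := by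
    intro t ht
    have := (convex_Icc a b).mul_sub_le_image_sub_of_le_deriv
      (f := deriv f) ((hdiff'.continuousOn).mono hsub)
      (hdiff'.mono ((interior_subset).trans hsub))
      (fun x hx => hc x (interior_subset hx))
      a ⟨le_rfl, hab⟩ t ht ht.1
    linarith
  set g : ℝ → ℝ := fun t => f t - c / 2 * (t - a) ^ 2 with hg
  have hgderiv : ∀ t ∈ Icc a b, HasDerivAt g (deriv f t - c / 2 * (2 * (t - a) ^ 1 * 1)) t := by
    intro t ht
    have hft : DifferentiableAt ℝ f t :=
      hdiff.differentiableAt (isOpen_Ioo.mem_nhds (hsub ht))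
    exact hft.hasDerivAt.sub ((((hasDerivAt_id t).sub_const a).pow 2).const_mul (c / 2))
  have hgC : ContinuousOn g (Icc a b) := by
    apply ContinuousOn.sub ((hdiff.continuousOn).mono hsub)
    fun_prop
  have hgD : DifferentiableOn ℝ g (interior (Icc a b)) := by
    intro t ht
    exact (hgderiv t (interior_subset ht)).differentiableAt.differentiableWithinAt
  have key := (convex_Icc a b).mul_sub_le_image_sub_of_le_deriv (f := g) hgC hgD
    (C := 0) (fun x hx => by
      rw [(hgderiv x (interior_subset hx)).deriv]
      have := step1 x (interior_subset hx)
      nlinarith)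
    a ⟨le_rfl, hab⟩ b ⟨hab, le_rfl⟩ hab
  simp only [hg] at key
  nlinarith [key]

/-- monotonicity on a subinterval of [1,2] from nonneg derivative -/
lemma mono_aux (f : ℝ → ℝ) (hf : ContDiffOn ℝ 2 f (Ico (0:ℝ) 5))
    (hd : ∀ t ∈ Ico (0:ℝ) 5, 0 ≤ deriv f t)
    (a b : ℝ) (h1a : 1 ≤ a) (hab : a ≤ b) (hb2 : b ≤ 2) :
    f a ≤ f b := by
  have hsub : Icc a b ⊆ Ioo (0:ℝ) 5 := fun t ht =>
    ⟨by linarith [ht.1], by linarith [ht.2]⟩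
  have hdiff : DifferentiableOn ℝ f (Ioo (0:ℝ) 5) :=
    (hf.mono Ioo_subset_Ico_self).differentiableOn (by norm_num)
  have := (convex_Icc a b).mul_sub_le_image_sub_of_le_deriv (f := f) (C := 0)
    ((hdiff.continuousOn).mono hsub) (hdiff.mono ((interior_subset).trans hsub))
    (fun x hx => hd x (Ioo_subset_Ico_self (hsub (interior_subset hx))))
    a ⟨le_rfl, hab⟩ b ⟨hab, le_rfl⟩ hab
  linarith

/-- **The key ODE-system lemma behind blow up.** Suppose for each `n ≥ 1`,
`ψ_n : [0,5) → ℝ` is `C²` with `ψ_n' ≥ 0` on `[0,5)`, `ψ_n ≥ ψ_{n-1} ≥ 0` for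
`n ≥ 2`, `ψ_n'' ≥ 2^{-n} e^{ψ_{n-1}} - 4` for `n ≥ 2` on `[0,5)`, and
`ψ_1(1) ≥ 9`. With `t_n = 2 - 2^{1-n}`, one has `ψ_n(t_n) ≥ 3n + 6` for all
`n ≥ 1`; in particular `ψ_n(t_n) → ∞`. -/
theorem psi_blowup (ψ : ℕ → ℝ → ℝ)
    (hC2 : ∀ n : ℕ, 1 ≤ n → ContDiffOn ℝ 2 (ψ n) (Ico (0:ℝ) 5))
    (hd1 : ∀ n : ℕ, 1 ≤ n → ∀ t ∈ Ico (0:ℝ) 5, 0 ≤ deriv (ψ n) t)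
    (hmono : ∀ n : ℕ, 2 ≤ n → ∀ t ∈ Ico (0:ℝ) 5,
      ψ (n - 1) t ≤ ψ n t ∧ 0 ≤ ψ (n - 1) t)
    (hd2 : ∀ n : ℕ, 2 ≤ n → ∀ t ∈ Ico (0:ℝ) 5,
      (2:ℝ) ^ (-(n:ℤ)) * Real.exp (ψ (n - 1) t) - 4 ≤ deriv (deriv (ψ n)) t)
    (h1 : 9 ≤ ψ 1 1) :
    (∀ n : ℕ, 1 ≤ n → 3 * (n : ℝ) + 6 ≤ ψ n (2 - (2:ℝ) ^ (1 - (n:ℤ)))) ∧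
    Tendsto (fun n : ℕ => ψ n (2 - (2:ℝ) ^ (1 - (n:ℤ)))) atTop atTop := by
  have main : ∀ n : ℕ, 1 ≤ n → 3 * (n : ℝ) + 6 ≤ ψ n (2 - (2:ℝ) ^ (1 - (n:ℤ))) := by
    intro n hn
    induction n, hn using Nat.le_induction with
    | base => norm_num; linarith
    | succ n hn ih =>
      set a : ℝ := 2 - (2:ℝ) ^ (1 - (n:ℤ)) with ha
      set b : ℝ := 2 - (2:ℝ) ^ (1 - ((n:ℤ) + 1)) with hb
      have hp : (0:ℝ) < (2:ℝ) ^ (-(n:ℤ)) := zpow_pos (by norm_num) _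
      have hpow1 : (2:ℝ) ^ (1 - (n:ℤ)) = 2 * (2:ℝ) ^ (-(n:ℤ)) := by
        rw [zpow_sub₀ (by norm_num : (2:ℝ) ≠ 0), zpow_neg, zpow_one]
        ring
      have hpow2 : (2:ℝ) ^ (1 - ((n:ℤ) + 1)) = (2:ℝ) ^ (-(n:ℤ)) := by
        congr 1; ring
      have hple : (2:ℝ) ^ (-(n:ℤ)) ≤ 1 / 2 := by
        have : (2:ℝ) ^ (-(n:ℤ)) ≤ (2:ℝ) ^ (-1 : ℤ) := by
          apply zpow_le_zpow_right₀ (by norm_num)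
          omega
        simpa using this
      have h1a : 1 ≤ a := by rw [ha, hpow1]; linarith
      have hab : a ≤ b := by rw [ha, hb, hpow1, hpow2]; linarith
      have hb2 : b ≤ 2 := by rw [hb, hpow2]; linarith
      have hba : b - a = (2:ℝ) ^ (-(n:ℤ)) := by
        rw [ha, hb, hpow1, hpow2]; ring
      have hsub : Icc a b ⊆ Ico (0:ℝ) 5 := fun t ht =>
        ⟨by linarith [ht.1], by linarith [ht.2]⟩
      -- ψ n ≥ 3n+6 on [a,b]
      have step1 : ∀ t ∈ Icc a b, 3 * (n:ℝ) + 6 ≤ ψ n t := by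
        intro t ht
        have := mono_aux (ψ n) (hC2 n hn) (hd1 n hn) a t h1a ht.1 (le_trans ht.2 hb2)
        linarith [ih]
      have hm2 : 2 ≤ n + 1 := by omega
      have hsucc : (n + 1) - 1 = n := by omega
      -- second derivative lower bound
      have step2 : ∀ t ∈ Icc a b,
          (2:ℝ) ^ (-((n:ℤ)+1)) * Real.exp (3 * (n:ℝ) + 6) - 4
            ≤ deriv (deriv (ψ (n+1))) t := by
        intro t ht
        have h := hd2 (n+1) hm2 t (hsub ht)
        rw [hsucc] at h
        have hexp : Real.exp (3 * (n:ℝ) + 6) ≤ Real.exp (ψ n t) :=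
          Real.exp_le_exp.mpr (step1 t ht)
        have : ((n:ℤ) + 1) = ((n+1 : ℕ) : ℤ) := by push_cast; ring
        rw [this]
        nlinarith [zpow_pos (show (0:ℝ) < 2 by norm_num) (-((n+1:ℕ):ℤ))]
      set c : ℝ := (2:ℝ) ^ (-((n:ℤ)+1)) * Real.exp (3 * (n:ℝ) + 6) - 4 with hcdef
      have grow := grow_aux (ψ (n+1)) (hC2 (n+1) (by omega)) a b c h1a hab hb2
        (hd1 (n+1) (by omega) a (hsub ⟨le_rfl, hab⟩)) step2
      -- ψ_{n+1}(a) ≥ ψ_n(a) ≥ 3n+6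
      have hmla : ψ n a ≤ ψ (n+1) a := by
        have := (hmono (n+1) hm2 a (hsub ⟨le_rfl, hab⟩)).1
        rwa [hsucc] at this
      have hpa : 3 * (n:ℝ) + 6 ≤ ψ (n+1) a :=
        le_trans (step1 a ⟨le_rfl, hab⟩) hmla
      -- the quantitative gain: c/2 * (b-a)^2 ≥ 3
      have hgain : (3:ℝ) ≤ c / 2 * (b - a) ^ 2 := by
        have hexp2 : (2:ℝ) ^ (3 * (n:ℤ) + 6) ≤ Real.exp (3 * (n:ℝ) + 6) := by
          have h2e : (2:ℝ) ≤ Real.exp 1 := by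
            have := Real.exp_one_gt_d9; linarith
          have : ((2:ℝ)) ^ (3 * n + 6 : ℕ) ≤ (Real.exp 1) ^ (3 * n + 6 : ℕ) :=
            pow_le_pow_left₀ (by norm_num) h2e _
          calc (2:ℝ) ^ (3 * (n:ℤ) + 6) = (2:ℝ) ^ (3 * n + 6 : ℕ) := by
                rw [← zpow_natCast]; congr 1
            _ ≤ (Real.exp 1) ^ (3 * n + 6 : ℕ) := this
            _ = Real.exp ((3 * n + 6 : ℕ) * 1) := by rw [← Real.exp_nat_mul]
            _ = Real.exp (3 * (n:ℝ) + 6) := by congr 1; push_cast; ring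
        have hmul : (2:ℝ) ^ (-((n:ℤ)+1)) * (2:ℝ) ^ (3 * (n:ℤ) + 6)
            = (2:ℝ) ^ (2 * (n:ℤ) + 5) := by
          rw [← zpow_add₀ (by norm_num : (2:ℝ) ≠ 0)]; congr 1; ring
        have hclow : (2:ℝ) ^ (2 * (n:ℤ) + 5) - 4 ≤ c := by
          rw [hcdef, ← hmul]
          have := zpow_pos (show (0:ℝ) < 2 by norm_num) (-((n:ℤ)+1))
          nlinarith
        have hsq : (b - a) ^ 2 = (2:ℝ) ^ (-2 * (n:ℤ)) := by
          rw [hba, show (-2 * (n:ℤ)) = (-(n:ℤ)) * 2 by ring, zpow_mul,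
            zpow_two, pow_two]
        have hbig : (2:ℝ) ^ (2 * (n:ℤ) + 5) * (2:ℝ) ^ (-2 * (n:ℤ)) = 32 := by
          rw [← zpow_add₀ (by norm_num : (2:ℝ) ≠ 0)]
          norm_num
        have hsmall : (2:ℝ) ^ (-2 * (n:ℤ)) ≤ 1 := by
          have : (2:ℝ) ^ (-2 * (n:ℤ)) ≤ (2:ℝ) ^ (0 : ℤ) := by
            apply zpow_le_zpow_right₀ (by norm_num); omega
          simpa using this
        have hsqpos : (0:ℝ) < (2:ℝ) ^ (-2 * (n:ℤ)) := zpow_pos (by norm_num) _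
        rw [hsq]
        nlinarith
      have : 3 * ((n:ℝ)+1) + 6 ≤ ψ (n+1) b := by
        calc 3 * ((n:ℝ)+1) + 6 = (3 * (n:ℝ) + 6) + 3 := by ring
          _ ≤ ψ (n+1) a + c / 2 * (b - a) ^ 2 := by linarith
          _ ≤ ψ (n+1) b := grow
      calc 3 * ((n+1 : ℕ):ℝ) + 6 = 3 * ((n:ℝ)+1) + 6 := by push_cast; ring
        _ ≤ ψ (n+1) b := this
        _ = ψ (n+1) (2 - (2:ℝ) ^ (1 - ((n+1:ℕ):ℤ))) := by
            rw [hb]; norm_num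
  refine ⟨main, ?_⟩
  apply tendsto_atTop_mono' atTop
    (show ∀ᶠ n : ℕ in atTop, 3 * (n:ℝ) + 6 ≤ ψ n (2 - (2:ℝ) ^ (1 - (n:ℤ))) from
      eventually_atTop.mpr ⟨1, fun n hn => main n hn⟩)
  apply tendsto_atTop_add_const_right
  exact (tendsto_natCast_atTop_atTop (R := ℝ)).const_mul_atTop (by norm_num)
end

section
/- Let C > 0 and f₀ ≥ 1. Let f_0 : [0,T] → ℝ be the constant function f₀, and for each n ≥ 1 let f_n : [0,T] → ℝ be differentiable with f_n(0) = f₀, f_n(t) ≥ 1 for all t, and f_n′(t) ≤ C · √(f_{n-1}(t)) · f_n(t) for all t ∈ [0,T]. Then for every n ≥ 1 and every t ∈ [0,T] with t < 1/(C √f₀), one has f_n(t) ≤ 1/( f₀^{-1/2} - C t )². -/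
open Set

/-- Gronwall-type auxiliary lemma: if `deriv g s ≤ C/(a - Cs) * g s`, then
`g t * (a - C t)` is bounded by its initial value `g 0 * a`. -/
lemma gronwall_aux (C a T : ℝ) (hC : 0 < C) (ha : 0 < a)
    (g : ℝ → ℝ)
    (hdiff : ∀ s ∈ Icc (0:ℝ) T, DifferentiableAt ℝ g s)
    (hder : ∀ s ∈ Icc (0:ℝ) T, C * s < a → deriv g s ≤ C / (a - C * s) * g s)
    (t : ℝ) (ht : t ∈ Icc (0:ℝ) T) (htlt : C * t < a) :
    g t * (a - C * t) ≤ g 0 * a := by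
  have hsub : Icc (0:ℝ) t ⊆ Icc 0 T := Icc_subset_Icc le_rfl ht.2
  have hmono : AntitoneOn (fun s => g s * (a - C * s)) (Icc 0 t) := by
    have hint : interior (Icc (0:ℝ) t) = Ioo 0 t := interior_Icc
    apply antitoneOn_of_deriv_nonpos (convex_Icc _ _)
    · exact ContinuousOn.mul
        (fun s hs => ((hdiff s (hsub hs)).continuousAt).continuousWithinAt)
        (by fun_prop)
    · intro s hs
      rw [hint] at hs
      exact (((hdiff s (hsub ⟨hs.1.le, hs.2.le⟩)).mul (by fun_prop))).differentiableWithinAt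
    · intro s hs
      rw [hint] at hs
      have hsT : s ∈ Icc (0:ℝ) T := hsub ⟨hs.1.le, hs.2.le⟩
      have hsa : C * s < a := by nlinarith [hs.2, hs.1]
      have hpos : 0 < a - C * s := by linarith
      have hd1 : HasDerivAt g (deriv g s) s := (hdiff s hsT).hasDerivAt
      have hd2 : HasDerivAt (fun x : ℝ => a - C * x) (-(C * 1)) s :=
        ((hasDerivAt_id s).const_mul C).const_sub a
      have hD : HasDerivAt (fun x => g x * (a - C * x))
          (deriv g s * (a - C * s) + g s * (-(C * 1))) s := hd1.mul hd2
      rw [hD.deriv]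
      have hle := hder s hsT hsa
      have h2 : deriv g s * (a - C * s) ≤ C * g s := by
        have h3 := mul_le_mul_of_nonneg_right hle hpos.le
        have h4 : C / (a - C * s) * g s * (a - C * s) = C * g s := by
          field_simp
        linarith [h3, h4.le, h4.ge]
      nlinarith
  have h0m : (0:ℝ) ∈ Icc (0:ℝ) t := ⟨le_rfl, ht.1⟩
  have htm : t ∈ Icc (0:ℝ) t := ⟨ht.1, le_rfl⟩
  have := hmono h0m htm ht.1
  simpa using this

/-- **Uniform bound for the iteration scheme.** If `f_0 ≡ f₀ ≥ 1` and for each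
`n ≥ 1`, `f_n` is differentiable on `[0,T]` with `f_n(0) = f₀`, `f_n ≥ 1`, and
`f_n' ≤ C √(f_{n-1}) f_n`, then `f_n(t) ≤ 1/(f₀^{-1/2} - C t)²` for every
`t ∈ [0,T]` with `t < 1/(C √f₀)`. -/
theorem iteration_uniform_bound (C f₀ T : ℝ) (hC : 0 < C) (hf₀ : 1 ≤ f₀)
    (f : ℕ → ℝ → ℝ)
    (h0 : ∀ t ∈ Icc (0:ℝ) T, f 0 t = f₀)
    (hinit : ∀ n : ℕ, 1 ≤ n → f n 0 = f₀)
    (hge1 : ∀ n : ℕ, 1 ≤ n → ∀ t ∈ Icc (0:ℝ) T, 1 ≤ f n t)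
    (hdiff : ∀ n : ℕ, 1 ≤ n → ∀ t ∈ Icc (0:ℝ) T,
      DifferentiableAt ℝ (f n) t ∧
      deriv (f n) t ≤ C * Real.sqrt (f (n - 1) t) * f n t) :
    ∀ n : ℕ, 1 ≤ n → ∀ t ∈ Icc (0:ℝ) T, t < 1 / (C * Real.sqrt f₀) →
      f n t ≤ 1 / ((Real.sqrt f₀)⁻¹ - C * t) ^ 2 := by
  set a : ℝ := (Real.sqrt f₀)⁻¹ with ha_def
  have hs1 : (1:ℝ) ≤ Real.sqrt f₀ := by
    rw [show (1:ℝ) = Real.sqrt 1 from (Real.sqrt_one).symm]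
    exact Real.sqrt_le_sqrt hf₀
  have hspos : 0 < Real.sqrt f₀ := lt_of_lt_of_le one_pos hs1
  have ha : 0 < a := inv_pos.mpr hspos
  have hsa : Real.sqrt f₀ * a = 1 := mul_inv_cancel₀ hspos.ne'
  have hf₀a : f₀ * a = Real.sqrt f₀ := by
    rw [ha_def, ← Real.mul_self_sqrt (by linarith : (0:ℝ) ≤ f₀)]
    field_simp
    rw [Real.sqrt_sq hspos.le]
  -- `t < 1/(C √f₀)` iff `C t < a`
  have hiff : ∀ t : ℝ, t < 1 / (C * Real.sqrt f₀) ↔ C * t < a := by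
    intro t
    constructor
    · intro h
      rw [lt_div_iff₀ (by positivity : (0:ℝ) < C * Real.sqrt f₀)] at h
      have e : t * (C * Real.sqrt f₀) * a = C * t := by
        rw [show t * (C * Real.sqrt f₀) * a = C * t * (Real.sqrt f₀ * a) by ring,
          hsa, mul_one]
      have h2 := mul_lt_mul_of_pos_right h ha
      rwa [one_mul, e] at h2
    · intro h
      rw [lt_div_iff₀ (by positivity : (0:ℝ) < C * Real.sqrt f₀)]
      have h2 := mul_lt_mul_of_pos_right h hspos
      have e : a * Real.sqrt f₀ = 1 := by rw [mul_comm]; exact hsa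
      rw [e] at h2
      nlinarith [h2]
  -- main step: given the sqrt bound on the previous level, conclude
  have main : ∀ n : ℕ, 1 ≤ n →
      (∀ s ∈ Icc (0:ℝ) T, C * s < a → Real.sqrt (f (n - 1) s) ≤ (a - C * s)⁻¹) →
      ∀ t ∈ Icc (0:ℝ) T, C * t < a → f n t ≤ 1 / (a - C * t) ^ 2 := by
    intro n hn hsqrt t ht hta
    have hg := gronwall_aux C a T hC ha (f n)
      (fun s hs => (hdiff n hn s hs).1)
      (fun s hs hsa' => by
        have h1 := (hdiff n hn s hs).2
        have h2 := hsqrt s hs hsa'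
        have hfpos : (0:ℝ) ≤ f n s := le_trans zero_le_one (hge1 n hn s hs)
        calc deriv (f n) s ≤ C * Real.sqrt (f (n - 1) s) * f n s := h1
          _ ≤ C * (a - C * s)⁻¹ * f n s :=
            mul_le_mul_of_nonneg_right (mul_le_mul_of_nonneg_left h2 hC.le) hfpos
          _ = C / (a - C * s) * f n s := by rw [div_eq_mul_inv])
      t ht hta
    rw [hinit n hn, hf₀a] at hg
    have hpos : 0 < a - C * t := by linarith
    rw [le_div_iff₀ (by positivity : (0:ℝ) < (a - C * t) ^ 2)]
    have hCt : 0 ≤ C * t := mul_nonneg hC.le ht.1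
    have h3 : Real.sqrt f₀ * (a - C * t) ≤ 1 := by nlinarith [hsa, hspos]
    nlinarith [mul_le_mul_of_nonneg_right hg hpos.le]
  intro n hn
  induction n, hn using Nat.le_induction with
  | base =>
    intro t ht htlt
    refine main 1 le_rfl ?_ t ht ((hiff t).mp htlt)
    intro s hs hsa'
    have hp : 0 < a - C * s := by linarith
    rw [show (1:ℕ) - 1 = 0 from rfl, h0 s hs,
      show Real.sqrt f₀ = a⁻¹ by rw [ha_def, inv_inv]]
    have hCs : 0 ≤ C * s := mul_nonneg hC.le hs.1
    exact inv_anti₀ hp (by linarith)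
  | succ n hn ih =>
    intro t ht htlt
    refine main (n + 1) (by omega) ?_ t ht ((hiff t).mp htlt)
    intro s hs hsa'
    have hp : 0 < a - C * s := by linarith
    have hb := ih s hs ((hiff s).mpr hsa')
    simp only [Nat.add_sub_cancel]
    have h4 : Real.sqrt (f n s) ≤ Real.sqrt (1 / (a - C * s) ^ 2) :=
      Real.sqrt_le_sqrt hb
    rwa [one_div, ← inv_pow, Real.sqrt_sq (inv_nonneg.mpr hp.le)] at h4
end
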